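/- arXiv:0710.1183 — 10 statements merged into one kernel-verified Lean document; each statement's English description precedes it below -/
import Mathlib

section
/- Let G be a finite abelian group, S ⊆ G, H ≤ G a subgroup with S + H ≠ G, and suppose there exists g ∈ G with 2g ∈ S + H. Then the vertex connectivity of the addition Cayley graph Cay⁺(S) is at most |S+H| − |H|. -/
open Pointwise

/-- The addition Cayley graph induced by `S` on `G`. -/
def addCayley {G : Type*} [AddCommGroup G] (S : Set G) : SimpleGraph G where
  Adj a b := a ≠ b ∧ a + b ∈ S
  symm := by
    constructor
    intro a b h
    exact ⟨h.1.symm, by rw [add_comm]; exact h.2⟩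
  loopless := by
    constructor
    intro a h
    exact h.1 rfl

/-- The vertex connectivity of a graph: the least number of vertices whose removal
disconnects the graph or leaves at most one vertex. -/
noncomputable def vertexConnectivity {V : Type*} (Γ : SimpleGraph V) : ℕ :=
  sInf {k | ∃ s : Set V, s.ncard = k ∧
    ((sᶜ : Set V).ncard ≤ 1 ∨ ¬ (Γ.induce (sᶜ : Set V)).Connected)}

/-- If `H ≤ G` with `S + H ≠ G` and `2g ∈ S + H` for some `g`, then
`κ(Cay⁺(S)) ≤ |S+H| − |H|`. -/
theorem kappa_le_of_subgroup {G : Type*} [AddCommGroup G] [Fintype G]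
    (S : Set G) (H : AddSubgroup G)
    (hSH : S + (H : Set G) ≠ Set.univ)
    (hg : ∃ g : G, g + g ∈ S + (H : Set G)) :
    vertexConnectivity (addCayley S) ≤ (S + (H : Set G)).ncard - (H : Set G).ncard := by
  obtain ⟨g, hgg⟩ := hg
  set T : Set G := (fun y => y - g) '' (S + (H : Set G)) with hTdef
  set C : Set G := (fun h => g + h) '' (H : Set G) with hCdef
  have hmemT : ∀ x : G, x ∈ T ↔ x + g ∈ S + (H : Set G) := by
    intro x
    constructor
    · rintro ⟨z, hz, rfl⟩; simpa using hz
    · intro hx; exact ⟨x + g, hx, by simp⟩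
  have hCT : C ⊆ T := by
    rintro _ ⟨h, hh, rfl⟩
    rw [hmemT]
    obtain ⟨a, ha, b, hb, hab⟩ := hgg
    exact ⟨a, ha, b + h, H.add_mem hb hh, by show a + (b + h) = g + h + g; simp only [] at hab; rw [← add_assoc, hab]; abel⟩
  have hclosed : ∀ x y : G, x ∈ C → x + y ∈ S → y ∈ T := by
    rintro _ y ⟨h, hh, rfl⟩ hxy
    rw [hmemT]
    exact ⟨g + h + y, hxy, -h, H.neg_mem hh, by abel⟩
  set s : Set G := T \ C with hsdef
  -- a vertex outside T
  have hb : ∃ b : G, b ∉ T := by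
    by_contra hall
    push_neg at hall
    apply hSH
    ext y
    simp only [Set.mem_univ, iff_true]
    have := (hmemT (y - g)).mp (hall (y - g))
    simpa using this
  obtain ⟨b, hbT⟩ := hb
  have hgC : g ∈ C := ⟨0, H.zero_mem, by simp⟩
  have hgs : g ∈ sᶜ := fun hgs => hgs.2 hgC
  have hbs : b ∈ sᶜ := fun hbs => hbT hbs.1
  have hdisc : ¬ ((addCayley S).induce (sᶜ : Set G)).Connected := by
    intro hconn
    have hreach := hconn.preconnected ⟨g, hgs⟩ ⟨b, hbs⟩
    obtain ⟨w⟩ := hreach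
    have key : ∀ (u v : (sᶜ : Set G)) (w : ((addCayley S).induce (sᶜ : Set G)).Walk u v),
        (u : G) ∈ C → (v : G) ∈ C := by
      intro u v w
      induction w with
      | nil => exact id
      | @cons u' v' _ hadj _ ih =>
        intro hu
        apply ih
        have hT : (v' : G) ∈ T := hclosed _ _ hu hadj.2
        by_contra hC
        exact v'.2 ⟨hT, hC⟩
    have : (b : G) ∈ C := key _ _ w hgC
    exact hbT (hCT this)
  apply Nat.sInf_le
  refine ⟨s, ?_, Or.inr hdisc⟩
  have h1 : s.ncard = T.ncard - C.ncard := Set.ncard_diff hCT (Set.toFinite C)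
  have h2 : T.ncard = (S + (H : Set G)).ncard :=
    Set.ncard_image_of_injective _ (sub_left_injective)
  have h3 : C.ncard = (H : Set G).ncard :=
    Set.ncard_image_of_injective _ (add_right_injective g)
  rw [h1, h2, h3]
end

section
/- Let G be a finite abelian group, S ⊆ G, and suppose subgroups L ≤ G₀ ≤ G and an element g₀ ∈ G₀ satisfy: |G₀/L| is even and greater than 2, and S + L = (G ∖ G₀) ∪ (g₀ + L). Then the vertex connectivity of Cay⁺(S) is at most |S+L| − |L|. -/
open Pointwise

/-- If `L ≤ G₀ ≤ G`, `g₀ ∈ G₀`, `|G₀/L|` is even and greater than `2`, and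
`S + L = (G ∖ G₀) ∪ (g₀ + L)`, then `κ(Cay⁺(S)) ≤ |S+L| − |L|`. -/
theorem kappa_le_of_L {G : Type*} [AddCommGroup G] [Fintype G]
    (S : Set G) (L G₀ : AddSubgroup G) (hLG₀ : L ≤ G₀) (g₀ : G) (hg₀ : g₀ ∈ G₀)
    (hindex : ∃ n : ℕ, Nat.card G₀ = n * Nat.card L ∧ Even n ∧ 2 < n)
    (hSL : S + (L : Set G) = (Set.univ \ (G₀ : Set G)) ∪ ({g₀} + (L : Set G))) :
    vertexConnectivity (addCayley S) ≤ (S + (L : Set G)).ncard - (L : Set G).ncard := by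
  classical
  obtain ⟨n, hn, -, hn2⟩ := hindex
  set s : Set G := Set.univ \ (G₀ : Set G) with hs
  set A : Set G := (L : Set G) ∪ ({g₀} + (L : Set G)) with hA
  -- the coset is inside G₀
  have hcoset : ({g₀} + (L : Set G)) ⊆ (G₀ : Set G) := by
    rintro x ⟨y, hy, z, hz, rfl⟩
    simp only [Set.mem_singleton_iff] at hy
    subst hy
    exact AddSubgroup.add_mem _ hg₀ (hLG₀ hz)
  have hAsub : A ⊆ (G₀ : Set G) := by
    rintro x (hx | hx)
    · exact hLG₀ hx
    · exact hcoset hx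
  -- cardinality of the coset
  have hcard_coset : ({g₀} + (L : Set G)).ncard = (L : Set G).ncard := by
    rw [Set.singleton_add]
    exact Set.ncard_image_of_injective _ (add_right_injective g₀)
  -- cardinality of S + L
  have hdisj : Disjoint s ({g₀} + (L : Set G)) := by
    rw [Set.disjoint_left]
    rintro x ⟨-, hx2⟩ hx3
    exact hx2 (hcoset hx3)
  have hcardSL : (S + (L : Set G)).ncard = s.ncard + (L : Set G).ncard := by
    rw [hSL, Set.ncard_union_eq hdisj (Set.toFinite _) (Set.toFinite _), hcard_coset]
  have hsncard : s.ncard = (S + (L : Set G)).ncard - (L : Set G).ncard := by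
    omega
  -- complement of s is G₀
  have hscompl : sᶜ = (G₀ : Set G) := by
    rw [hs, Set.diff_eq, Set.compl_inter, compl_compl, Set.compl_univ, Set.empty_union]
  -- key closure property of A under adjacency inside G₀
  have hkey : ∀ a b : G, a ∈ A → b ∈ (G₀ : Set G) → a + b ∈ S → b ∈ A := by
    intro a b ha hb hab
    have habG : a + b ∈ (G₀ : Set G) := AddSubgroup.add_mem _ (hAsub ha) hb
    have habSL : a + b ∈ S + (L : Set G) :=
      ⟨a + b, hab, 0, AddSubgroup.zero_mem _, add_zero _⟩
    rw [hSL] at habSL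
    rcases habSL with ⟨-, h2⟩ | ⟨y, hy, l, hl, hyl⟩
    · exact absurd habG h2
    have hy' : y = g₀ := hy
    have hyl1 : g₀ + l = a + b := by rw [← hy']; exact hyl
    rcases ha with ha | ⟨y', hy2, l', hl', hyl'⟩
    · -- a ∈ L, so b = g₀ + (l - a) ∈ g₀ + L
      refine Or.inr ⟨g₀, rfl, l - a, sub_mem hl ha, ?_⟩
      have hb : b = g₀ + l - a := by rw [hyl1, add_comm a b, add_sub_cancel_right]
      rw [hb]; abel_nf
    · -- a ∈ g₀ + L, so b = l - l' ∈ L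
      have hy2' : y' = g₀ := hy2
      have hyl2 : g₀ + l' = a := by
        have h0 : y' + l' = a := hyl'
        rw [hy2'] at h0; exact h0
      refine Or.inl ?_
      have hb : b = l - l' := by
        have h1 : g₀ + l = (g₀ + l') + b := by rw [hyl1, hyl2]
        rw [add_assoc] at h1
        have h2 : l = l' + b := add_left_cancel h1
        rw [h2]; abel
      rw [hb]
      exact sub_mem hl hl'
  -- pick an element of G₀ outside A
  have hLpos : 0 < (L : Set G).ncard :=
    (Set.ncard_pos (Set.toFinite _)).mpr ⟨0, AddSubgroup.zero_mem _⟩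
  have hAcard : A.ncard ≤ 2 * (L : Set G).ncard := by
    calc A.ncard ≤ (L : Set G).ncard + ({g₀} + (L : Set G)).ncard :=
          Set.ncard_union_le _ _
    _ = 2 * (L : Set G).ncard := by rw [hcard_coset]; ring
  have hG₀card : (G₀ : Set G).ncard = n * (L : Set G).ncard := by
    rw [← Nat.card_coe_set_eq, ← Nat.card_coe_set_eq]
    exact hn
  have hAlt : A.ncard < (G₀ : Set G).ncard := by
    rw [hG₀card]
    calc A.ncard ≤ 2 * (L : Set G).ncard := hAcard
    _ < n * (L : Set G).ncard := by
        apply Nat.mul_lt_mul_of_lt_of_le hn2 le_rfl hLpos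
  have hAne : A ≠ (G₀ : Set G) := fun h => by rw [h] at hAlt; exact lt_irrefl _ hAlt
  obtain ⟨x, hxG₀, hxA⟩ := Set.exists_of_ssubset ⟨hAsub, fun h => hAne (le_antisymm hAsub h)⟩
  -- the induced graph on G₀ is disconnected
  have hdisconn : ¬ ((addCayley S).induce (sᶜ : Set G)).Connected := by
    rw [hscompl]
    intro hconn
    have h0 : (0 : G) ∈ (G₀ : Set G) := AddSubgroup.zero_mem _
    have hreach := hconn.preconnected ⟨0, h0⟩ ⟨x, hxG₀⟩
    obtain ⟨w⟩ := hreach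
    -- along any walk from a vertex in A, we stay in A
    have hwalk : ∀ {u v : (G₀ : Set G)},
        ((addCayley S).induce (G₀ : Set G)).Walk u v → (u : G) ∈ A → (v : G) ∈ A := by
      intro u v w
      induction w with
      | nil => exact id
      | cons h p ih =>
        intro hu
        exact ih (hkey _ _ hu (Subtype.prop _) h.2)
    have hx : x ∈ A := hwalk w (Or.inl (AddSubgroup.zero_mem _))
    exact hxA hx
  -- conclude
  rw [vertexConnectivity, ← hsncard]
  exact Nat.sInf_le ⟨s, rfl, Or.inr hdisconn⟩
end

section
/- Let L ≤ G₀ ≤ G be finite abelian groups such that G₀/L is a cyclic 2-group and 2∗(G/L) := {2x : x ∈ G/L} is a proper subgroup of G₀/L. Then exp(G₀/L) = exp(G/L). -/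
open Pointwise

/-- If `L ≤ G₀ ≤ G` are finite abelian groups, `G₀/L` is a cyclic 2-group and
`2∗(G/L)` is a proper subgroup of `G₀/L`, then `exp(G₀/L) = exp(G/L)`. -/
theorem exponent_eq_of_cyclic_two_group {G : Type*} [AddCommGroup G] [Fintype G]
    (L G₀ : AddSubgroup G) (hLG₀ : L ≤ G₀)
    (hcyc : IsAddCyclic (G₀.map (QuotientAddGroup.mk' L)))
    (h2grp : ∃ k : ℕ, Nat.card (G₀.map (QuotientAddGroup.mk' L)) = 2 ^ k)
    (hsub : {x : G ⧸ L | ∃ y : G ⧸ L, x = y + y} ⊆ (G₀.map (QuotientAddGroup.mk' L) : Set (G ⧸ L)))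
    (hproper : {x : G ⧸ L | ∃ y : G ⧸ L, x = y + y} ≠ (G₀.map (QuotientAddGroup.mk' L) : Set (G ⧸ L))) :
    AddMonoid.exponent (G₀.map (QuotientAddGroup.mk' L)) = AddMonoid.exponent (G ⧸ L) := by
  classical
  set Q := G ⧸ L
  set H : AddSubgroup Q := G₀.map (QuotientAddGroup.mk' L) with hH
  obtain ⟨k, hk⟩ := h2grp
  -- doubling homomorphism
  let D : Q →+ Q := AddMonoidHom.mk' (fun x => x + x) (by intro a b; beta_reduce; abel)
  have hrange : (D.range : Set Q) = {x : Q | ∃ y : Q, x = y + y} := by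
    ext x; simp [D, AddMonoidHom.mem_range, eq_comm]
  set T : AddSubgroup Q := D.range with hT
  have hTH : T ≤ H := by
    intro x hx
    exact hsub (hrange ▸ hx)
  have hTneH : T ≠ H := by
    intro h
    exact hproper (by rw [← hrange, h])
  -- card T divides 2^(k-1)
  have hcardTH : Nat.card T ∣ 2 ^ k := hk ▸ AddSubgroup.card_dvd_of_le hTH
  have hlt : Nat.card T < 2 ^ k := by
    rcases lt_or_eq_of_le (Nat.le_of_dvd (by positivity) hcardTH) with h | h
    · exact h
    · exact absurd (AddSubgroup.eq_of_le_of_card_ge hTH (le_of_eq (hk.trans h.symm))) hTneH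
  obtain ⟨j, hjk, hj⟩ := (Nat.dvd_prime_pow Nat.prime_two).mp hcardTH
  have hjlt : j < k := by
    by_contra hc
    have h2 : 2 ^ k ≤ 2 ^ j := Nat.pow_le_pow_right (by norm_num) (not_lt.mp hc)
    omega
  have hTdvd : Nat.card T ∣ 2 ^ (k - 1) := hj ▸ pow_dvd_pow 2 (by omega)
  -- exponent Q divides 2 * exponent T
  have hexpT : AddMonoid.exponent T ∣ Nat.card T := AddGroup.exponent_dvd_nat_card
  have hQdvd : AddMonoid.exponent Q ∣ 2 ^ k := by
    refine AddMonoid.exponent_dvd_of_forall_nsmul_eq_zero fun x => ?_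
    have hx : x + x ∈ T := ⟨x, rfl⟩
    have h1 : AddMonoid.exponent T • (⟨x + x, hx⟩ : T) = 0 :=
      AddMonoid.exponent_nsmul_eq_zero _
    have h2 : AddMonoid.exponent T • (x + x) = 0 := by
      simpa using congrArg (Subtype.val) h1
    have h3 : (2 ^ (k-1)) • (x + x) = 0 := by
      obtain ⟨c, hc⟩ := hexpT.trans hTdvd
      rw [hc, mul_comm, mul_smul, h2, smul_zero]
    have hk1 : 2 ^ k = 2 ^ (k - 1) * 2 := by
      rw [← pow_succ]
      congr 1
      omega
    rw [hk1, mul_smul, two_nsmul]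
    exact h3
  -- exponent H = 2^k
  have hexpH : AddMonoid.exponent H = 2 ^ k := by
    rw [IsAddCyclic.exponent_eq_card, hk]
  -- exponent H divides exponent Q
  have hHQ : AddMonoid.exponent H ∣ AddMonoid.exponent Q := by
    refine AddMonoid.exponent_dvd_of_forall_nsmul_eq_zero fun g => ?_
    have : AddMonoid.exponent Q • (g : Q) = 0 := AddMonoid.exponent_nsmul_eq_zero _
    exact Subtype.ext (by simpa using this)
  exact Nat.dvd_antisymm hHQ (hexpH ▸ hQdvd)
end

section
/- Let S be a finite subset and H, L finite subgroups of an abelian group G with |L| ≤ |H| and S + H ≠ S + H + L. Set I := H ∩ L. If max{|S+H| − |H|, |S+L| − |L|} ≤ |S+I| − |I|, then |S+H| − |H| = |S+L| − |L| = |S+I| − |I|. -/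
open Pointwise

/-- saturation: preimage of image under quotient map is `X + N`. -/
lemma sat_eq {G : Type*} [AddCommGroup G] (N : AddSubgroup G) (X : Set G) :
    (QuotientAddGroup.mk (s := N)) ⁻¹' (QuotientAddGroup.mk '' X) = X + (N : Set G) := by
  ext y
  simp only [Set.mem_preimage, Set.mem_image, Set.mem_add]
  constructor
  · rintro ⟨x, hx, hxy⟩
    refine ⟨x, hx, y - x, ?_, by abel⟩
    rw [QuotientAddGroup.eq] at hxy
    simpa [sub_eq_neg_add] using hxy
  · rintro ⟨x, hx, n, hn, rfl⟩
    exact ⟨x, hx, by rw [QuotientAddGroup.eq]; simpa [add_comm] using N.neg_mem hn⟩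

lemma card_add_addsubgroup {G : Type*} [AddCommGroup G] (N : AddSubgroup G) (X : Set G) :
    (X + (N : Set G)).ncard = (QuotientAddGroup.mk (s := N) '' X).ncard * (N : Set G).ncard := by
  rw [← sat_eq, ← Nat.card_coe_set_eq, ← Nat.card_coe_set_eq, ← Nat.card_coe_set_eq,
    Nat.card_congr (QuotientAddGroup.preimageMkEquivAddSubgroupProdSet N _), Nat.card_prod]
  rw [mul_comm]
  rfl

lemma ncard_prod' {α β : Type*} (s : Set α) (t : Set β) : (s ×ˢ t).ncard = s.ncard * t.ncard := by
  rw [← Nat.card_coe_set_eq, ← Nat.card_coe_set_eq, ← Nat.card_coe_set_eq,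
    ← Nat.card_prod]
  exact Nat.card_congr (Equiv.Set.prod s t)

lemma arith_core {P Q k r a w sH sL sS : ℤ}
    (hPQ : Q ≤ P) (hkQ : k + 1 ≤ Q) (hk1 : 1 ≤ k) (hr1 : 1 ≤ r)
    (ha : a ≤ k * r)
    (hSH : k * P + w ≤ sH) (hSL : r * Q + w ≤ sL) (hS : sS = a + w)
    (h1 : sH - P ≤ sS - 1) (h2 : sL - Q ≤ sS - 1) :
    sH - P = sS - 1 ∧ sL - Q = sS - 1 := by
  have dH : k * P - k * r ≤ P - 1 := by nlinarith
  have dL : r * Q - k * r ≤ Q - 1 := by nlinarith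
  have hqk : (1 : ℤ) ≤ Q - k := by linarith
  have c3 : k * r ≤ (k - 1) * P + 1 := by
    nlinarith [mul_nonneg (by linarith : (0:ℤ) ≤ k - 1)
        (by nlinarith : (0:ℤ) ≤ P * (Q - k) - Q),
      mul_le_mul_of_nonneg_left dL (by linarith : (0:ℤ) ≤ k)]
  have c4 : (k - 1) * P + 1 ≤ k * r := by linarith
  have c5 : Q - 1 ≤ r * (Q - k) := by
    nlinarith [mul_nonneg (mul_nonneg (by linarith : (0:ℤ) ≤ Q)
        (by linarith : (0:ℤ) ≤ k - 1)) (by linarith : (0:ℤ) ≤ Q - k - 1),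
      mul_le_mul_of_nonneg_right c4 (by linarith : (0:ℤ) ≤ Q - k),
      mul_nonneg (by linarith : (0:ℤ) ≤ k - 1) (by linarith : (0:ℤ) ≤ P - Q)]
  constructor
  · nlinarith
  · nlinarith

lemma core_lemma {G : Type*} [AddCommGroup G] (S : Set G) (hS : S.Finite) 
    (H L : AddSubgroup G) (hH : (H : Set G).Finite) (hL : (L : Set G).Finite)
    (hdisj : H ⊓ L = ⊥) (hcard : (L : Set G).ncard ≤ (H : Set G).ncard)
    (hne : S + (H : Set G) ≠ S + (H : Set G) + (L : Set G))
    (h1 : ((S + (H : Set G)).ncard : ℤ) - (H : Set G).ncard ≤ (S.ncard : ℤ) - 1)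
    (h2 : ((S + (L : Set G)).ncard : ℤ) - (L : Set G).ncard ≤ (S.ncard : ℤ) - 1) :
    ((S + (H : Set G)).ncard : ℤ) - (H : Set G).ncard = (S.ncard : ℤ) - 1 ∧
    ((S + (L : Set G)).ncard : ℤ) - (L : Set G).ncard = (S.ncard : ℤ) - 1 := by
  -- obtain a witness y ∈ S+H+L, y ∉ S+H
  have hsub : S + (H : Set G) ⊆ S + (H : Set G) + (L : Set G) := fun x hx => by
    simpa using Set.add_mem_add hx L.zero_mem
  have hnsub : ¬ (S + (H : Set G) + (L : Set G) ⊆ S + (H : Set G)) :=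
    fun h => hne (subset_antisymm hsub h)
  obtain ⟨y, hySHL, hyn⟩ := Set.not_subset.mp hnsub
  obtain ⟨w, hw, l, hl, rfl⟩ := Set.mem_add.mp hySHL
  obtain ⟨s₀, hs₀, h, hh, rfl⟩ := Set.mem_add.mp hw
  -- the big coset E
  set K : AddSubgroup G := H ⊔ L with hK
  set E : Set G := {s₀} + (K : Set G) with hEdef
  have hHK : H ≤ K := le_sup_left
  have hLK : L ≤ K := le_sup_right
  have memE : ∀ x : G, x ∈ E ↔ x - s₀ ∈ K := by
    intro x
    constructor
    · intro hx
      obtain ⟨a, ha, g, hg, rfl⟩ := Set.mem_add.mp hx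
      rw [Set.mem_singleton_iff] at ha
      subst ha
      simpa using hg
    · intro hx
      exact Set.mem_add.mpr ⟨s₀, rfl, x - s₀, hx, by abel⟩
  have hEsat : ∀ x g : G, g ∈ K → (x + g ∈ E ↔ x ∈ E) := by
    intro x g hg
    rw [memE, memE]
    constructor
    · intro hx
      have := K.sub_mem hx hg
      simpa [add_sub_right_comm, add_sub_cancel_right] using this
    · intro hx
      have := K.add_mem hx hg
      convert this using 1
      abel
  set A : Set G := S ∩ E with hA
  have hs₀E : s₀ ∈ E := (memE s₀).mpr (by simpa using K.zero_mem)
  have hs₀A : s₀ ∈ A := ⟨hs₀, hs₀E⟩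
  have hyE : s₀ + h + l ∈ E := (memE _).mpr (by
    have : h + l ∈ K := K.add_mem (hHK hh) (hLK hl)
    convert this using 1
    abel)
  have hAfin : A.Finite := hS.subset Set.inter_subset_left
  have hSdfin : (S \ E).Finite := hS.subset Set.diff_subset
  -- split lemma, for both H and L
  have split : ∀ (N : AddSubgroup G), (N : Set G).Finite → N ≤ K →
      (A + (N : Set G)).ncard + (S \ E).ncard ≤ (S + (N : Set G)).ncard := by
    intro N hNfin hNK
    have hsplit : S + (N : Set G) = (A + (N : Set G)) ∪ ((S \ E) + (N : Set G)) := by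
      rw [← Set.union_add, Set.inter_union_diff]
    have hdisj2 : Disjoint (A + (N : Set G)) ((S \ E) + (N : Set G)) := by
      rw [Set.disjoint_left]
      intro x hx1 hx2
      obtain ⟨a, ha, n, hn, rfl⟩ := Set.mem_add.mp hx1
      obtain ⟨b, hb, m, hm, hbm⟩ := Set.mem_add.mp hx2
      have hxE : a + n ∈ E := (hEsat a n (hNK hn)).mpr ha.2
      rw [← hbm] at hxE
      exact hb.2 ((hEsat b m (hNK hm)).mp hxE)
    have hfin1 : (A + (N : Set G)).Finite := hAfin.add hNfin
    have hfin2 : ((S \ E) + (N : Set G)).Finite := hSdfin.add hNfin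
    rw [hsplit, Set.ncard_union_eq hdisj2 hfin1 hfin2]
    have : (S \ E).ncard ≤ ((S \ E) + (N : Set G)).ncard := by
      apply Set.ncard_le_ncard _ hfin2
      exact fun x hx => by simpa using Set.add_mem_add hx N.zero_mem
    omega
  have splitH := split H hH hHK
  have splitL := split L hL hLK
  have hScard : S.ncard = A.ncard + (S \ E).ncard := by
    rw [hA, Set.ncard_inter_add_ncard_diff_eq_ncard S E hS]
  -- coset counts
  set k : ℕ := (QuotientAddGroup.mk (s := H) '' A).ncard with hk
  set r : ℕ := (QuotientAddGroup.mk (s := L) '' A).ncard with hr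
  have hAH : (A + (H : Set G)).ncard = k * (H : Set G).ncard := card_add_addsubgroup H A
  have hAL : (A + (L : Set G)).ncard = r * (L : Set G).ncard := card_add_addsubgroup L A
  -- |A| ≤ k * r
  have hinjHL : Function.Injective
      (fun x : G => ((QuotientAddGroup.mk x : G ⧸ H), (QuotientAddGroup.mk x : G ⧸ L))) := by
    intro x y hxy
    simp only [Prod.mk.injEq] at hxy
    have h1' : -x + y ∈ H := QuotientAddGroup.eq.mp hxy.1
    have h2' : -x + y ∈ L := QuotientAddGroup.eq.mp hxy.2
    have : -x + y ∈ H ⊓ L := ⟨h1', h2'⟩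
    rw [hdisj, AddSubgroup.mem_bot] at this
    exact neg_add_eq_zero.mp this
  have hAkr : A.ncard ≤ k * r := by
    calc A.ncard = ((fun x : G => ((QuotientAddGroup.mk x : G ⧸ H),
          (QuotientAddGroup.mk x : G ⧸ L))) '' A).ncard :=
          (Set.ncard_image_of_injective A hinjHL).symm
      _ ≤ ((QuotientAddGroup.mk (s := H) '' A) ×ˢ (QuotientAddGroup.mk (s := L) '' A)).ncard := by
          apply Set.ncard_le_ncard
          · rintro ⟨u, v⟩ ⟨x, hx, hxuv⟩
            simp only [Prod.mk.injEq] at hxuv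
            exact ⟨⟨x, hx, hxuv.1⟩, ⟨x, hx, hxuv.2⟩⟩
          · exact ((hAfin.image _).prod (hAfin.image _))
      _ = k * r := ncard_prod' _ _
  have hk1 : 1 ≤ k := by
    rw [hk]
    have : (QuotientAddGroup.mk (s := H) '' A).Nonempty := ⟨_, Set.mem_image_of_mem _ hs₀A⟩
    have := Set.ncard_pos (hAfin.image _) |>.mpr this
    omega
  have hr1 : 1 ≤ r := by
    rw [hr]
    have : (QuotientAddGroup.mk (s := L) '' A).Nonempty := ⟨_, Set.mem_image_of_mem _ hs₀A⟩
    have := Set.ncard_pos (hAfin.image _) |>.mpr this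
    omega
  -- k ≤ |L| - 1
  have hEfin : E.Finite := by
    have hKfin : (K : Set G).Finite := by
      rw [AddSubgroup.add_normal H L]
      exact hH.add hL
    exact (Set.finite_singleton s₀).add hKfin
  have hkL : k + 1 ≤ (L : Set G).ncard := by
    have himg : (QuotientAddGroup.mk (s := H) '' A) ⊆
        (QuotientAddGroup.mk (s := H) '' E) \ {(QuotientAddGroup.mk (s₀ + h + l) : G ⧸ H)} := by
      rintro u ⟨x, hx, rfl⟩
      refine ⟨Set.mem_image_of_mem _ hx.2, ?_⟩
      simp only [Set.mem_singleton_iff]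
      intro heq
      apply hyn
      have : -x + (s₀ + h + l) ∈ H := QuotientAddGroup.eq.mp heq
      exact Set.mem_add.mpr ⟨x, hx.1, -x + (s₀ + h + l), this, by abel⟩
    have hyimg : (QuotientAddGroup.mk (s₀ + h + l) : G ⧸ H) ∈
        QuotientAddGroup.mk (s := H) '' E := Set.mem_image_of_mem _ hyE
    have hEcard : (QuotientAddGroup.mk (s := H) '' E).ncard = (L : Set G).ncard := by
      have hEHL : E = {s₀} + (H : Set G) + (L : Set G) := by
        rw [hEdef, AddSubgroup.add_normal H L, add_assoc]
      have himgE : QuotientAddGroup.mk (s := H) '' E =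
          {(QuotientAddGroup.mk s₀ : G ⧸ H)} + (QuotientAddGroup.mk (s := H) '' (L : Set G)) := by
        rw [hEHL]
        have := Set.image_add (QuotientAddGroup.mk' H) (s := {s₀} + (H : Set G)) (t := (L : Set G))
        rw [QuotientAddGroup.coe_mk'] at this
        rw [this]
        congr 1
        have := Set.image_add (QuotientAddGroup.mk' H) (s := ({s₀} : Set G)) (t := (H : Set G))
        rw [QuotientAddGroup.coe_mk'] at this
        rw [this, Set.image_singleton]
        have hH0 : QuotientAddGroup.mk (s := H) '' (H : Set G) = {(0 : G ⧸ H)} := by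
          ext u
          simp only [Set.mem_image, Set.mem_singleton_iff]
          constructor
          · rintro ⟨x, hx, rfl⟩
            exact (QuotientAddGroup.eq_zero_iff x).mpr hx
          · rintro rfl
            exact ⟨0, H.zero_mem, rfl⟩
        rw [hH0]
        simp
      rw [himgE, Set.singleton_add]
      rw [Set.ncard_image_of_injective _ (add_right_injective _)]
      apply Set.ncard_image_of_injOn
      intro a ha b hb hab
      have : -a + b ∈ H := QuotientAddGroup.eq.mp hab
      have : -a + b ∈ H ⊓ L := ⟨this, L.add_mem (L.neg_mem ha) hb⟩
      rw [hdisj, AddSubgroup.mem_bot] at this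
      exact neg_add_eq_zero.mp this
    have h5 : k ≤ ((QuotientAddGroup.mk (s := H) '' E) \
        {(QuotientAddGroup.mk (s₀ + h + l) : G ⧸ H)}).ncard :=
      Set.ncard_le_ncard himg ((hEfin.image _).diff)
    rw [Set.ncard_diff_singleton_of_mem hyimg, hEcard] at h5
    have hLpos : 1 ≤ (L : Set G).ncard := Set.ncard_pos hL |>.mpr ⟨0, L.zero_mem⟩
    omega
  have hq1 : 1 ≤ (L : Set G).ncard := by omega
  have hPQ : ((L : Set G).ncard : ℤ) ≤ ((H : Set G).ncard : ℤ) := by exact_mod_cast hcard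
  have hkQ : (k : ℤ) + 1 ≤ ((L : Set G).ncard : ℤ) := by exact_mod_cast hkL
  have hk1' : (1 : ℤ) ≤ (k : ℤ) := by exact_mod_cast hk1
  have hr1' : (1 : ℤ) ≤ (r : ℤ) := by exact_mod_cast hr1
  have hAkr' : (A.ncard : ℤ) ≤ (k : ℤ) * r := by exact_mod_cast hAkr
  have hSH : (k : ℤ) * ((H : Set G).ncard : ℤ) + ((S \ E).ncard : ℤ)
      ≤ ((S + (H : Set G)).ncard : ℤ) := by
    have := splitH
    rw [hAH] at this
    exact_mod_cast this
  have hSL : (r : ℤ) * ((L : Set G).ncard : ℤ) + ((S \ E).ncard : ℤ)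
      ≤ ((S + (L : Set G)).ncard : ℤ) := by
    have := splitL
    rw [hAL] at this
    exact_mod_cast this
  have hS' : (S.ncard : ℤ) = (A.ncard : ℤ) + ((S \ E).ncard : ℤ) := by exact_mod_cast hScard
  exact arith_core hPQ hkQ hk1' hr1' hAkr' hSH hSL hS' h1 h2

lemma add_self_of_le {G : Type*} [AddCommGroup G] {I H : AddSubgroup G} (h : I ≤ H) :
    (H : Set G) + (I : Set G) = (H : Set G) := by
  apply subset_antisymm
  · intro x hx
    obtain ⟨a, ha, b, hb, rfl⟩ := Set.mem_add.mp hx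
    exact H.add_mem ha (h hb)
  · intro x hx
    simpa using Set.add_mem_add hx I.zero_mem

/-- Lemma 2 (first part): if `S` is a finite subset and `H, L` finite subgroups of an
abelian group `G` with `|L| ≤ |H|`, `S + H ≠ S + H + L`, and
`max{|S+H|−|H|, |S+L|−|L|} ≤ |S+I|−|I|` for `I := H ∩ L`, then all three quantities
are equal. -/
theorem geom_lemma_card {G : Type*} [AddCommGroup G]
    (S : Set G) (hS : S.Finite) (H L : AddSubgroup G)
    (hHfin : (H : Set G).Finite) (hLfin : (L : Set G).Finite)
    (hcard : ((L : Set G)).ncard ≤ ((H : Set G)).ncard)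
    (hne : S + (H : Set G) ≠ S + (H : Set G) + (L : Set G)) :
    let I : AddSubgroup G := H ⊓ L
    max (((S + (H : Set G)).ncard : ℤ) - ((H : Set G)).ncard)
        (((S + (L : Set G)).ncard : ℤ) - ((L : Set G)).ncard)
      ≤ ((S + (I : Set G)).ncard : ℤ) - ((I : Set G)).ncard →
    (((S + (H : Set G)).ncard : ℤ) - ((H : Set G)).ncard
        = ((S + (I : Set G)).ncard : ℤ) - ((I : Set G)).ncard
      ∧ ((S + (L : Set G)).ncard : ℤ) - ((L : Set G)).ncard
        = ((S + (I : Set G)).ncard : ℤ) - ((I : Set G)).ncard) := by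
  intro I hmax
  have hIH : I ≤ H := inf_le_left
  have hIL : I ≤ L := inf_le_right
  have hIfin : (I : Set G).Finite := hHfin.subset hIH
  have hIpos : 1 ≤ (I : Set G).ncard := (Set.ncard_pos hIfin).mpr ⟨0, I.zero_mem⟩
  -- the quotient setup
  set π : G →+ G ⧸ I := QuotientAddGroup.mk' I with hπ
  have hπcoe : ⇑π = QuotientAddGroup.mk (s := I) := QuotientAddGroup.coe_mk' I
  set H' : AddSubgroup (G ⧸ I) := AddSubgroup.map π H with hH'
  set L' : AddSubgroup (G ⧸ I) := AddSubgroup.map π L with hL'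
  set S' : Set (G ⧸ I) := ⇑π '' S with hS'
  have hH'c : (H' : Set (G ⧸ I)) = ⇑π '' (H : Set G) := AddSubgroup.coe_map π H
  have hL'c : (L' : Set (G ⧸ I)) = ⇑π '' (L : Set G) := AddSubgroup.coe_map π L
  -- cardinality transfers
  have cardH : (H : Set G).ncard = (H' : Set (G ⧸ I)).ncard * (I : Set G).ncard := by
    rw [hH'c, hπcoe, ← card_add_addsubgroup I (H : Set G), add_self_of_le hIH]
  have cardL : (L : Set G).ncard = (L' : Set (G ⧸ I)).ncard * (I : Set G).ncard := by
    rw [hL'c, hπcoe, ← card_add_addsubgroup I (L : Set G), add_self_of_le hIL]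
  have cardSI : (S + (I : Set G)).ncard = S'.ncard * (I : Set G).ncard := by
    rw [hS', hπcoe, ← card_add_addsubgroup I S]
  have satH : S + (H : Set G) + (I : Set G) = S + (H : Set G) := by
    rw [add_assoc, add_self_of_le hIH]
  have satL : S + (H : Set G) + (L : Set G) + (I : Set G) = S + (H : Set G) + (L : Set G) := by
    rw [add_assoc, add_self_of_le hIL]
  have satL2 : S + (L : Set G) + (I : Set G) = S + (L : Set G) := by
    rw [add_assoc, add_self_of_le hIL]
  have imgSH : ⇑π '' (S + (H : Set G)) = S' + (H' : Set (G ⧸ I)) := by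
    rw [Set.image_add π, hS', hH'c]
  have imgSL : ⇑π '' (S + (L : Set G)) = S' + (L' : Set (G ⧸ I)) := by
    rw [Set.image_add π, hS', hL'c]
  have imgSHL : ⇑π '' (S + (H : Set G) + (L : Set G))
      = S' + (H' : Set (G ⧸ I)) + (L' : Set (G ⧸ I)) := by
    rw [Set.image_add π, Set.image_add π, hS', hH'c, hL'c]
  have cardSH : (S + (H : Set G)).ncard = (S' + (H' : Set (G ⧸ I))).ncard * (I : Set G).ncard := by
    rw [← imgSH, hπcoe, ← card_add_addsubgroup I (S + (H : Set G)), satH]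
  have cardSL : (S + (L : Set G)).ncard = (S' + (L' : Set (G ⧸ I))).ncard * (I : Set G).ncard := by
    rw [← imgSL, hπcoe, ← card_add_addsubgroup I (S + (L : Set G)), satL2]
  -- hypotheses for the core lemma
  have hS'fin : S'.Finite := hS.image _
  have hH'fin : (H' : Set (G ⧸ I)).Finite := by rw [hH'c]; exact hHfin.image _
  have hL'fin : (L' : Set (G ⧸ I)).Finite := by rw [hL'c]; exact hLfin.image _
  have hdisj : H' ⊓ L' = ⊥ := by
    rw [eq_bot_iff]
    rintro x ⟨hx1, hx2⟩
    obtain ⟨a, ha, rfl⟩ := hx1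
    obtain ⟨b, hb, hba⟩ := hx2
    rw [hπcoe] at hba ⊢
    have : -b + a ∈ I := QuotientAddGroup.eq.mp hba
    have haL : a ∈ L := by
      have := L.add_mem (hIL this) hb
      simpa [add_comm] using this
    have : a ∈ I := ⟨ha, haL⟩
    rw [AddSubgroup.mem_bot]
    exact (QuotientAddGroup.eq_zero_iff a).mpr this
  have hcard' : (L' : Set (G ⧸ I)).ncard ≤ (H' : Set (G ⧸ I)).ncard := by
    rw [cardH, cardL] at hcard
    exact Nat.le_of_mul_le_mul_right hcard (by omega)
  have hne' : S' + (H' : Set (G ⧸ I)) ≠ S' + (H' : Set (G ⧸ I)) + (L' : Set (G ⧸ I)) := by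
    intro heq
    apply hne
    have himg : ⇑π '' (S + (H : Set G)) = ⇑π '' (S + (H : Set G) + (L : Set G)) := by
      rw [imgSH, imgSHL]
      exact heq
    have hpre := congrArg (fun T => QuotientAddGroup.mk (s := I) ⁻¹' T) himg
    simp only [hπcoe] at hpre
    rw [sat_eq I (S + (H : Set G)), sat_eq I (S + (H : Set G) + (L : Set G)),
      satH, satL] at hpre
    exact hpre
  have hIZ : (0 : ℤ) < ((I : Set G).ncard : ℤ) := by exact_mod_cast hIpos
  have h1' : ((S' + (H' : Set (G ⧸ I))).ncard : ℤ) - ((H' : Set (G ⧸ I)).ncard : ℤ)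
      ≤ (S'.ncard : ℤ) - 1 := by
    have hmx := le_trans (le_max_left _ _) hmax
    rw [cardSH, cardH, cardSI] at hmx
    push_cast at hmx
    have hmul : (((S' + (H' : Set (G ⧸ I))).ncard : ℤ) - ((H' : Set (G ⧸ I)).ncard : ℤ))
        * ((I : Set G).ncard : ℤ) ≤ ((S'.ncard : ℤ) - 1) * ((I : Set G).ncard : ℤ) := by
      linarith
    exact le_of_mul_le_mul_right hmul hIZ
  have h2' : ((S' + (L' : Set (G ⧸ I))).ncard : ℤ) - ((L' : Set (G ⧸ I)).ncard : ℤ)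
      ≤ (S'.ncard : ℤ) - 1 := by
    have hmx := le_trans (le_max_right _ _) hmax
    rw [cardSL, cardL, cardSI] at hmx
    push_cast at hmx
    have hmul : (((S' + (L' : Set (G ⧸ I))).ncard : ℤ) - ((L' : Set (G ⧸ I)).ncard : ℤ))
        * ((I : Set G).ncard : ℤ) ≤ ((S'.ncard : ℤ) - 1) * ((I : Set G).ncard : ℤ) := by
      linarith
    exact le_of_mul_le_mul_right hmul hIZ
  obtain ⟨e1, e2⟩ := core_lemma S' hS'fin H' L' hH'fin hL'fin hdisj hcard' hne' h1' h2'
  constructor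
  · rw [cardSH, cardH, cardSI]
    push_cast
    linear_combination ((I : Set G).ncard : ℤ) * e1
  · rw [cardSL, cardL, cardSI]
    push_cast
    linear_combination ((I : Set G).ncard : ℤ) * e2
end

section
/- Let S be a finite subset and H, L finite subgroups of an abelian group G with |L| ≤ |H|, S + H ≠ S + H + L, and max{|S+H|−|H|, |S+L|−|L|} ≤ |S+I|−|I| where I := H ∩ L. Then there exists g ∈ G such that (S+I) ∖ (g+H+L) is a (possibly empty) union of (H+L)-cosets, and either (i) (S+I) ∩ (g+H+L) = g+I, or (ii) (S+I) ∩ (g+H+L) = (g+H+L) ∖ (g+(H ∪ L)) and |H| = |L|. -/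
open Pointwise
namespace GeomAux
variable {G : Type*} [AddCommGroup G]

lemma singleton_add_eq_image (g : G) (A : Set G) : ({g} : Set G) + A = (g + ·) '' A := by
  ext x; simp [Set.mem_add, eq_comm]

lemma mem_singleton_add {g x : G} {A : Set G} : x ∈ ({g} : Set G) + A ↔ x - g ∈ A := by
  rw [singleton_add_eq_image]
  constructor
  · rintro ⟨a, ha, rfl⟩; simpa using ha
  · intro h; refine ⟨x - g, h, ?_⟩; show g + (x - g) = x; abel

lemma singleton_add_finite {A : Set G} (h : A.Finite) (g : G) : (({g}:Set G) + A).Finite := by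
  rw [singleton_add_eq_image]; exact h.image _

lemma singleton_add_ncard (g : G) (A : Set G) : (({g}:Set G) + A).ncard = A.ncard := by
  rw [singleton_add_eq_image]
  exact Set.ncard_image_of_injective _ (add_right_injective g)

lemma mem_coset_self (g : G) (K : AddSubgroup G) : g ∈ ({g}:Set G) + (K:Set G) :=
  mem_singleton_add.2 (by simp [K.zero_mem])

lemma coset_eq_of_mem {K : AddSubgroup G} {g x : G} (h : x ∈ ({g}:Set G) + (K:Set G)) :
    ({x}:Set G) + (K:Set G) = ({g}:Set G) + (K:Set G) := by
  rw [mem_singleton_add] at h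
  ext y
  rw [mem_singleton_add, mem_singleton_add]
  constructor
  · intro hy; have := K.add_mem hy h; simpa [sub_add_sub_cancel] using this
  · intro hy; have := K.sub_mem hy h
    have e : y - g - (x - g) = y - x := by abel
    rwa [e] at this

lemma coset_disjoint {K : AddSubgroup G} {g x : G} (h : x ∉ ({g}:Set G) + (K:Set G)) :
    Disjoint (({x}:Set G) + (K:Set G)) (({g}:Set G) + (K:Set G)) := by
  rw [Set.disjoint_left]
  intro a hax hag
  have e := (coset_eq_of_mem hax).symm.trans (coset_eq_of_mem hag)
  exact h (e ▸ mem_coset_self x K)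

lemma subgroup_set_add_of_le {H K : AddSubgroup G} (h : H ≤ K) :
    (K : Set G) + (H : Set G) = (K : Set G) := by
  apply subset_antisymm
  · rintro x ⟨a, ha, b, hb, rfl⟩; exact K.add_mem ha (h hb)
  · intro x hx; exact ⟨x, hx, 0, H.zero_mem, add_zero x⟩

lemma coset_add_subgroup_of_le {H K : AddSubgroup G} (h : H ≤ K) (g : G) :
    (({g}:Set G) + (K:Set G)) + (H:Set G) = ({g}:Set G) + (K:Set G) := by
  rw [add_assoc, subgroup_set_add_of_le h]

lemma subset_add_subgroup (A : Set G) (H : AddSubgroup G) : A ⊆ A + (H:Set G) := by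
  intro a ha; exact ⟨a, ha, 0, H.zero_mem, add_zero a⟩


lemma coset_subset_of_periodic {H : AddSubgroup G} {P : Set G} (hP : P + (H:Set G) ⊆ P)
    {c : G} (hc : c ∈ P) : ({c}:Set G) + (H:Set G) ⊆ P := by
  intro x hx
  rw [mem_singleton_add] at hx
  have h1 : c + (x - c) ∈ P := hP ⟨c, hc, x - c, hx, rfl⟩
  have e : c + (x - c) = x := by abel
  rwa [e] at h1

lemma mem_of_add_mem_periodic {H : AddSubgroup G} {C : Set G} (hC : C + (H:Set G) ⊆ C)
    {x y : G} (hy : y ∈ H) (hx : x + y ∈ C) : x ∈ C := by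
  have h1 : (x + y) + (-y) ∈ C := hC ⟨x + y, hx, -y, H.neg_mem hy, rfl⟩
  have e : (x + y) + (-y) = x := by abel
  rwa [e] at h1

lemma diff_periodic {H : AddSubgroup G} {P C : Set G} (hP : P + (H:Set G) ⊆ P)
    (hC : C + (H:Set G) ⊆ C) : (P \ C) + (H:Set G) ⊆ P \ C := by
  rintro z ⟨x, hx, y, hy, rfl⟩
  exact ⟨hP ⟨x, hx.1, y, hy, rfl⟩, fun hmem => hx.2 (mem_of_add_mem_periodic hC hy hmem)⟩

lemma coset_periodic (H : AddSubgroup G) (c : G) :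
    (({c}:Set G) + (H:Set G)) + (H:Set G) ⊆ ({c}:Set G) + (H:Set G) := by
  rw [coset_add_subgroup_of_le le_rfl]

lemma ncard_peel {H : AddSubgroup G} {P : Set G} (hPfin : P.Finite)
    (hP : P + (H:Set G) ⊆ P) {c : G} (hc : c ∈ P) :
    (P \ (({c}:Set G) + (H:Set G))).ncard + (H:Set G).ncard = P.ncard := by
  have h1 := Set.ncard_diff_add_ncard_of_subset (coset_subset_of_periodic hP hc) hPfin
  rwa [singleton_add_ncard] at h1

lemma periodic_ncard_dvd (H : AddSubgroup G) (hHfin : (H:Set G).Finite) :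
    ∀ n : ℕ, ∀ P : Set G, P.Finite → P + (H:Set G) ⊆ P → P.ncard = n →
      (H:Set G).ncard ∣ n := by
  intro n
  induction n using Nat.strong_induction_on with
  | _ n ih =>
    intro P hPfin hP hcard
    rcases P.eq_empty_or_nonempty with rfl | ⟨c, hc⟩
    · simp at hcard; simp [← hcard]
    · have hpos : 0 < (H:Set G).ncard := (Set.ncard_pos hHfin).2 ⟨0, H.zero_mem⟩
      have hpeel := ncard_peel hPfin hP hc
      have hlt : (P \ (({c}:Set G) + (H:Set G))).ncard < n := by omega
      obtain ⟨m, hm⟩ := ih _ hlt (P \ (({c}:Set G) + (H:Set G))) (hPfin.diff)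
        (diff_periodic hP (coset_periodic H c)) rfl
      exact ⟨m + 1, by rw [← hcard, ← hpeel, hm]; ring⟩

lemma coset_inter_coset (H L : AddSubgroup G) {g c d : G}
    (hc : c ∈ ({g}:Set G) + ((H ⊔ L : AddSubgroup G) : Set G))
    (hd : d ∈ ({g}:Set G) + ((H ⊔ L : AddSubgroup G) : Set G)) :
    ∃ e, (({c}:Set G) + (H:Set G)) ∩ (({d}:Set G) + (L:Set G))
        = ({e}:Set G) + ((H ⊓ L : AddSubgroup G) : Set G) := by
  rw [mem_singleton_add] at hc hd
  have hdc : d - c ∈ (H ⊔ L : AddSubgroup G) := by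
    have h1 := AddSubgroup.sub_mem _ hd hc
    have e : d - g - (c - g) = d - c := by abel
    rwa [e] at h1
  have hdc0 : d - c ∈ ((H ⊔ L : AddSubgroup G) : Set G) := hdc
  have hdc' : d - c ∈ (H : Set G) + (L : Set G) := by
    rwa [AddSubgroup.normal_add H L] at hdc0
  obtain ⟨h0, hh0, l0, hl0, hsum⟩ := hdc'
  refine ⟨c + h0, ?_⟩
  have hd2 : d = c + h0 + l0 := by
    have hs : h0 + l0 = d - c := hsum
    have h3 : d = h0 + l0 + c := sub_eq_iff_eq_add.mp hs.symm
    rw [h3]; abel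
  ext x
  simp only [Set.mem_inter_iff, mem_singleton_add, AddSubgroup.coe_inf, Set.mem_inter_iff,
    SetLike.mem_coe]
  constructor
  · rintro ⟨hxc, hxd⟩
    constructor
    · have h1 : x - c - h0 ∈ H := H.sub_mem hxc hh0
      have e : x - c - h0 = x - (c + h0) := by abel
      rwa [e] at h1
    · have h1 : x - d + l0 ∈ L := L.add_mem hxd hl0
      have e : x - d + l0 = x - (c + h0) := by rw [hd2]; abel
      rwa [e] at h1
  · rintro ⟨hxH, hxL⟩
    constructor
    · have h1 : (x - (c + h0)) + h0 ∈ H := H.add_mem hxH hh0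
      have e : (x - (c + h0)) + h0 = x - c := by abel
      rwa [e] at h1
    · have h1 : (x - (c + h0)) - l0 ∈ L := L.sub_mem hxL hl0
      have e : (x - (c + h0)) - l0 = x - d := by rw [hd2]; abel
      rwa [e] at h1


lemma coset_inter_periodic_ncard (H L : AddSubgroup G) (hLfin : (L:Set G).Finite) :
    ∀ n : ℕ, ∀ (R : Set G) (g c : G), R.Finite → R + (L:Set G) ⊆ R →
      R ⊆ ({g}:Set G) + ((H ⊔ L : AddSubgroup G):Set G) →
      c ∈ ({g}:Set G) + ((H ⊔ L : AddSubgroup G):Set G) → R.ncard = n →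
      ((({c}:Set G) + (H:Set G)) ∩ R).ncard * (L:Set G).ncard
        = n * ((H ⊓ L : AddSubgroup G) : Set G).ncard := by
  intro n
  induction n using Nat.strong_induction_on with
  | _ n ih =>
    intro R g c hRfin hR hRsub hc hcard
    rcases R.eq_empty_or_nonempty with rfl | ⟨d, hd⟩
    · simp at hcard; simp [← hcard]
    · have hlpos : 0 < (L:Set G).ncard := (Set.ncard_pos hLfin).2 ⟨0, L.zero_mem⟩
      have hDsub : ({d}:Set G) + (L:Set G) ⊆ R := coset_subset_of_periodic hR hd
      have hpeel : (R \ (({d}:Set G) + (L:Set G))).ncard + (L:Set G).ncard = R.ncard :=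
        ncard_peel hRfin hR hd
      have hR'per : (R \ (({d}:Set G) + (L:Set G))) + (L:Set G) ⊆ R \ (({d}:Set G) + (L:Set G)) :=
        diff_periodic hR (coset_periodic L d)
      have hR'sub : (R \ (({d}:Set G) + (L:Set G))) ⊆ ({g}:Set G) + ((H ⊔ L : AddSubgroup G):Set G) :=
        fun x hx => hRsub hx.1
      have hlt : (R \ (({d}:Set G) + (L:Set G))).ncard < n := by omega
      have IH := ih _ hlt _ g c (hRfin.diff) hR'per hR'sub hc rfl
      obtain ⟨e, he⟩ := coset_inter_coset H L hc (hRsub hd)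
      have hsplit : (({c}:Set G) + (H:Set G)) ∩ R
          = ((({c}:Set G) + (H:Set G)) ∩ (({d}:Set G) + (L:Set G)))
            ∪ ((({c}:Set G) + (H:Set G)) ∩ (R \ (({d}:Set G) + (L:Set G)))) := by
        rw [← Set.inter_union_distrib_left, Set.union_diff_cancel hDsub]
      have hdisj : Disjoint
          ((({c}:Set G) + (H:Set G)) ∩ (({d}:Set G) + (L:Set G)))
          ((({c}:Set G) + (H:Set G)) ∩ (R \ (({d}:Set G) + (L:Set G)))) :=
        (Set.disjoint_sdiff_right).mono Set.inter_subset_right Set.inter_subset_right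
      have hfin1 : ((({c}:Set G) + (H:Set G)) ∩ (({d}:Set G) + (L:Set G))).Finite :=
        (singleton_add_finite hLfin d).subset Set.inter_subset_right
      have hfin2 : ((({c}:Set G) + (H:Set G)) ∩ (R \ (({d}:Set G) + (L:Set G)))).Finite :=
        (hRfin.diff).subset Set.inter_subset_right
      have hcD : ((({c}:Set G) + (H:Set G)) ∩ (({d}:Set G) + (L:Set G))).ncard
          = ((H ⊓ L : AddSubgroup G) : Set G).ncard := by
        rw [he, singleton_add_ncard]
      rw [hsplit, Set.ncard_union_eq hdisj hfin1 hfin2, hcD]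
      have hn : (R \ (({d}:Set G) + (L:Set G))).ncard + (L:Set G).ncard = n := by omega
      nlinarith [IH, hn]

lemma periodic_inter_periodic_ncard (H L : AddSubgroup G)
    (hHfin : (H:Set G).Finite) (hLfin : (L:Set G).Finite) :
    ∀ n : ℕ, ∀ (P R : Set G) (g : G), P.Finite → R.Finite →
      P + (H:Set G) ⊆ P → R + (L:Set G) ⊆ R →
      P ⊆ ({g}:Set G) + ((H ⊔ L : AddSubgroup G):Set G) →
      R ⊆ ({g}:Set G) + ((H ⊔ L : AddSubgroup G):Set G) → P.ncard = n →
      (P ∩ R).ncard * (H:Set G).ncard * (L:Set G).ncard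
        = n * R.ncard * ((H ⊓ L : AddSubgroup G) : Set G).ncard := by
  intro n
  induction n using Nat.strong_induction_on with
  | _ n ih =>
    intro P R g hPfin hRfin hP hR hPsub hRsub hcard
    rcases P.eq_empty_or_nonempty with rfl | ⟨c, hc⟩
    · simp at hcard; simp [← hcard]
    · have hhpos : 0 < (H:Set G).ncard := (Set.ncard_pos hHfin).2 ⟨0, H.zero_mem⟩
      have hCsub : ({c}:Set G) + (H:Set G) ⊆ P := coset_subset_of_periodic hP hc
      have hpeel : (P \ (({c}:Set G) + (H:Set G))).ncard + (H:Set G).ncard = P.ncard :=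
        ncard_peel hPfin hP hc
      have hP'per : (P \ (({c}:Set G) + (H:Set G))) + (H:Set G) ⊆ P \ (({c}:Set G) + (H:Set G)) :=
        diff_periodic hP (coset_periodic H c)
      have hP'sub : (P \ (({c}:Set G) + (H:Set G))) ⊆ ({g}:Set G) + ((H ⊔ L : AddSubgroup G):Set G) :=
        fun x hx => hPsub hx.1
      have hlt : (P \ (({c}:Set G) + (H:Set G))).ncard < n := by omega
      have IH := ih _ hlt _ R g (hPfin.diff) hRfin hP'per hR hP'sub hRsub rfl
      have hB := coset_inter_periodic_ncard H L hLfin R.ncard R g c hRfin hR hRsub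
        (hPsub hc) rfl
      have hsplit : P ∩ R
          = ((({c}:Set G) + (H:Set G)) ∩ R) ∪ ((P \ (({c}:Set G) + (H:Set G))) ∩ R) := by
        rw [← Set.union_inter_distrib_right, Set.union_diff_cancel hCsub]
      have hdisj : Disjoint ((({c}:Set G) + (H:Set G)) ∩ R)
          ((P \ (({c}:Set G) + (H:Set G))) ∩ R) :=
        (Set.disjoint_sdiff_right).mono Set.inter_subset_left Set.inter_subset_left
      have hfin1 : ((({c}:Set G) + (H:Set G)) ∩ R).Finite := hRfin.subset Set.inter_subset_right
      have hfin2 : ((P \ (({c}:Set G) + (H:Set G))) ∩ R).Finite := hRfin.subset Set.inter_subset_right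
      rw [hsplit, Set.ncard_union_eq hdisj hfin1 hfin2]
      have hn : (P \ (({c}:Set G) + (H:Set G))).ncard + (H:Set G).ncard = n := by omega
      have hB' : ((({c}:Set G) + (H:Set G)) ∩ R).ncard * (H:Set G).ncard * (L:Set G).ncard
          = (H:Set G).ncard * (R.ncard * ((H ⊓ L : AddSubgroup G):Set G).ncard) := by
        rw [← hB]; ring
      rw [← hn]
      nlinarith [IH, hB']


lemma delta_core {M : AddSubgroup G} (hMfin : (M:Set G).Finite) {T W : Set G}
    (hTfin : T.Finite) (hW : W ⊆ T)
    (hdisj : Disjoint (W + (M:Set G)) ((T \ W) + (M:Set G))) :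
    (W + (M:Set G)).ncard + T.ncard ≤ (T + (M:Set G)).ncard + W.ncard := by
  have hTM : T + (M:Set G) = (W + (M:Set G)) ∪ ((T \ W) + (M:Set G)) := by
    rw [← Set.union_add, Set.union_diff_cancel hW]
  have f1 : (W + (M:Set G)).Finite := (hTfin.subset hW).add hMfin
  have f2 : ((T \ W) + (M:Set G)).Finite := (hTfin.diff).add hMfin
  have h1 : (T + (M:Set G)).ncard = (W + (M:Set G)).ncard + ((T \ W) + (M:Set G)).ncard := by
    rw [hTM, Set.ncard_union_eq hdisj f1 f2]
  have h2 : (T \ W).ncard ≤ ((T \ W) + (M:Set G)).ncard :=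
    Set.ncard_le_ncard (subset_add_subgroup _ M) f2
  have h3 := Set.ncard_diff_add_ncard_of_subset hW hTfin
  omega

lemma inter_coset_add_subset {Kg M : AddSubgroup G} (hM : M ≤ Kg) (T : Set G) (t : G) :
    (T ∩ (({t}:Set G) + (Kg:Set G))) + (M:Set G) ⊆ ({t}:Set G) + (Kg:Set G) := by
  rintro z ⟨x, hx, y, hy, rfl⟩
  have h1 : x + y ∈ (({t}:Set G) + (Kg:Set G)) + (M:Set G) := ⟨x, hx.2, y, hy, rfl⟩
  rwa [coset_add_subgroup_of_le hM] at h1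

lemma diff_coset_add_disjoint {Kg M : AddSubgroup G} (hM : M ≤ Kg) {A : Set G} {t : G}
    (hA : Disjoint A (({t}:Set G) + (Kg:Set G))) :
    Disjoint (A + (M:Set G)) (({t}:Set G) + (Kg:Set G)) := by
  rw [Set.disjoint_left]
  rintro z ⟨x, hx, y, hy, rfl⟩ hz
  have hxQ : x ∈ ({t}:Set G) + (Kg:Set G) :=
    mem_of_add_mem_periodic (coset_add_subgroup_of_le hM t).subset hy hz
  exact (Set.disjoint_left.1 hA) hx hxQ

lemma delta_one {Kg M : AddSubgroup G} (hM : M ≤ Kg) (hMfin : (M:Set G).Finite)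
    {T : Set G} (hTfin : T.Finite) (t : G) :
    ((T ∩ (({t}:Set G) + (Kg:Set G))) + (M:Set G)).ncard + T.ncard
      ≤ (T + (M:Set G)).ncard + (T ∩ (({t}:Set G) + (Kg:Set G))).ncard := by
  apply delta_core hMfin hTfin Set.inter_subset_left
  have hdd : T \ (T ∩ (({t}:Set G) + (Kg:Set G))) = T \ (({t}:Set G) + (Kg:Set G)) :=
    Set.diff_self_inter
  rw [hdd]
  have h2 : Disjoint ((T \ (({t}:Set G) + (Kg:Set G))) + (M:Set G))
      (({t}:Set G) + (Kg:Set G)) :=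
    diff_coset_add_disjoint hM Set.disjoint_sdiff_left
  exact (h2.mono_right (inter_coset_add_subset hM T t)).symm

lemma delta_two {Kg M : AddSubgroup G} (hM : M ≤ Kg) (hMfin : (M:Set G).Finite)
    {T : Set G} (hTfin : T.Finite) {t1 t2 : G}
    (ht : t2 ∉ ({t1}:Set G) + (Kg:Set G)) :
    ((T ∩ (({t1}:Set G) + (Kg:Set G))) + (M:Set G)).ncard
      + ((T ∩ (({t2}:Set G) + (Kg:Set G))) + (M:Set G)).ncard + T.ncard
      ≤ (T + (M:Set G)).ncard + (T ∩ (({t1}:Set G) + (Kg:Set G))).ncard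
        + (T ∩ (({t2}:Set G) + (Kg:Set G))).ncard := by
  have hQdisj : Disjoint (({t2}:Set G) + (Kg:Set G)) (({t1}:Set G) + (Kg:Set G)) :=
    coset_disjoint ht
  have hW1 := inter_coset_add_subset hM T t1
  have hW2 := inter_coset_add_subset hM T t2
  have hWsub : (T ∩ (({t1}:Set G) + (Kg:Set G))) ∪ (T ∩ (({t2}:Set G) + (Kg:Set G))) ⊆ T :=
    Set.union_subset Set.inter_subset_left Set.inter_subset_left
  have hdd : T \ ((T ∩ (({t1}:Set G) + (Kg:Set G))) ∪ (T ∩ (({t2}:Set G) + (Kg:Set G))))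
      = T \ ((({t1}:Set G) + (Kg:Set G)) ∪ (({t2}:Set G) + (Kg:Set G))) := by
    ext x; simp only [Set.mem_diff, Set.mem_union, Set.mem_inter_iff]; tauto
  have hRd1 : Disjoint (T \ ((({t1}:Set G) + (Kg:Set G)) ∪ (({t2}:Set G) + (Kg:Set G))))
      (({t1}:Set G) + (Kg:Set G)) := by
    rw [Set.disjoint_left]; intro a ha h1; exact ha.2 (Or.inl h1)
  have hRd2 : Disjoint (T \ ((({t1}:Set G) + (Kg:Set G)) ∪ (({t2}:Set G) + (Kg:Set G))))
      (({t2}:Set G) + (Kg:Set G)) := by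
    rw [Set.disjoint_left]; intro a ha h1; exact ha.2 (Or.inr h1)
  have hcore := delta_core hMfin hTfin hWsub (W :=
      (T ∩ (({t1}:Set G) + (Kg:Set G))) ∪ (T ∩ (({t2}:Set G) + (Kg:Set G)))) ?_
  · have hWadd : ((T ∩ (({t1}:Set G) + (Kg:Set G))) ∪ (T ∩ (({t2}:Set G) + (Kg:Set G))))
        + (M:Set G)
        = ((T ∩ (({t1}:Set G) + (Kg:Set G))) + (M:Set G))
          ∪ ((T ∩ (({t2}:Set G) + (Kg:Set G))) + (M:Set G)) := Set.union_add
    have fQ1 : ((T ∩ (({t1}:Set G) + (Kg:Set G))) + (M:Set G)).Finite :=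
      (hTfin.subset Set.inter_subset_left).add hMfin
    have fQ2 : ((T ∩ (({t2}:Set G) + (Kg:Set G))) + (M:Set G)).Finite :=
      (hTfin.subset Set.inter_subset_left).add hMfin
    have hdisjM : Disjoint ((T ∩ (({t1}:Set G) + (Kg:Set G))) + (M:Set G))
        ((T ∩ (({t2}:Set G) + (Kg:Set G))) + (M:Set G)) :=
      (hQdisj.symm.mono_left hW1).mono_right hW2
    have card1 := Set.ncard_union_eq hdisjM fQ1 fQ2
    have hdisjW : Disjoint (T ∩ (({t1}:Set G) + (Kg:Set G)))
        (T ∩ (({t2}:Set G) + (Kg:Set G))) :=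
      (hQdisj.symm.mono_left Set.inter_subset_right).mono_right Set.inter_subset_right
    have card2 := Set.ncard_union_eq hdisjW (hTfin.subset Set.inter_subset_left)
      (hTfin.subset Set.inter_subset_left)
    rw [hWadd, card1, card2] at hcore
    omega
  · rw [hdd]
    have h1 : Disjoint ((T \ ((({t1}:Set G) + (Kg:Set G)) ∪ (({t2}:Set G) + (Kg:Set G))))
        + (M:Set G)) (({t1}:Set G) + (Kg:Set G)) := diff_coset_add_disjoint hM hRd1
    have h2 : Disjoint ((T \ ((({t1}:Set G) + (Kg:Set G)) ∪ (({t2}:Set G) + (Kg:Set G))))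
        + (M:Set G)) (({t2}:Set G) + (Kg:Set G)) := diff_coset_add_disjoint hM hRd2
    have h12 : Disjoint ((T \ ((({t1}:Set G) + (Kg:Set G)) ∪ (({t2}:Set G) + (Kg:Set G))))
        + (M:Set G)) ((({t1}:Set G) + (Kg:Set G)) ∪ (({t2}:Set G) + (Kg:Set G))) := by
      rw [Set.disjoint_union_right]; exact ⟨h1, h2⟩
    have hsub : ((T ∩ (({t1}:Set G) + (Kg:Set G))) ∪ (T ∩ (({t2}:Set G) + (Kg:Set G))))
        + (M:Set G) ⊆ (({t1}:Set G) + (Kg:Set G)) ∪ (({t2}:Set G) + (Kg:Set G)) := by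
      rw [Set.union_add]
      exact Set.union_subset (Set.subset_union_of_subset_left hW1 _)
        (Set.subset_union_of_subset_right hW2 _)
    exact (h12.mono_right hsub).symm

end GeomAux

lemma geom_arith (h l a b x : ℕ) (hl : l ≤ h) (ha : 1 ≤ a) (hb : 1 ≤ b)
    (hbl : b + 1 ≤ l) (hx : 1 ≤ x) (hxab : x ≤ a * b)
    (hH : h * b + 1 ≤ x + h) (hL : l * a + 1 ≤ x + l) :
    (h * b + 1 = x + h ∧ l * a + 1 = x + l) ∧
    ((a = 1 ∧ b = 1 ∧ x = 1) ∨ (h = l ∧ a + 1 = h ∧ b + 1 = l ∧ x = a * b)) := by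
  have hl2 : 2 ≤ l := by omega
  -- a + 1 ≤ l
  have hstep : a * (b + 1) ≤ a * l := Nat.mul_le_mul_left a hbl
  have hal : a + 1 ≤ l := by nlinarith
  rcases Nat.lt_or_ge b 2 with hb1 | hb2
  · -- b = 1
    have hb1' : b = 1 := by omega
    subst hb1'
    have ha1 : a = 1 := by nlinarith
    subst ha1
    have hx1 : x = 1 := by omega
    subst hx1
    exact ⟨⟨by ring, by omega⟩, Or.inl ⟨rfl, rfl, rfl⟩⟩
  · -- b ≥ 2
    rcases Nat.lt_or_ge (b + 1) l with hv2 | hv1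
    · -- l ≥ b + 2 : contradiction
      exfalso
      -- from hL, hxab, b + 2 ≤ l : 2a + 1 ≤ l
      have h1 : a * (b + 2) ≤ a * l := Nat.mul_le_mul_left a (by omega)
      have h2a : 2 * a + 1 ≤ l := by nlinarith
      have h2a' : 2 * a + 1 ≤ h := le_trans h2a hl
      -- multiply by b : 2ab + b ≤ hb
      have h3 : (2 * a + 1) * b ≤ h * b := Nat.mul_le_mul_right b h2a'
      have h4 : h * 2 ≤ h * b := Nat.mul_le_mul_left h hb2
      nlinarith
    · -- b + 1 = l
      have hbl2 : l = b + 1 := by omega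
      subst hbl2
      -- show h = b + 1
      have hab : a ≤ b := by omega
      have h5 : a * b ≤ b * b := Nat.mul_le_mul_right b hab
      have hhb : h * b + 1 ≤ b * b + h := by nlinarith
      have hhl : h ≤ b + 1 := by
        by_contra hc
        have hc2 : b + 2 ≤ h := by omega
        obtain ⟨e, he⟩ : ∃ e, h = b + 2 + e := ⟨h - (b + 2), by omega⟩
        subst he
        have h6 : e ≤ e * b := Nat.le_mul_of_pos_right e (by omega)
        nlinarith
      have hhl' : h = b + 1 := by omega
      subst hhl'
      have hxb : b * b ≤ x := by nlinarith
      have hab' : a = b := by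
        by_contra hc
        have h7 : (a + 1) * b ≤ b * b := Nat.mul_le_mul_right b (by omega)
        nlinarith
      subst hab'
      have hx2 : x = a * a := le_antisymm hxab hxb
      exact ⟨⟨by rw [hx2]; ring, by rw [hx2]; ring⟩, Or.inr ⟨rfl, rfl, rfl, hx2⟩⟩

open GeomAux in
/-- Lemma 2 (second part): under the same hypotheses, there exists `g ∈ G` such that
`(S+I) ∖ (g+H+L)` is a (possibly empty) union of `(H+L)`-cosets and either
(i) `(S+I) ∩ (g+H+L) = g+I`, or
(ii) `(S+I) ∩ (g+H+L) = (g+H+L) ∖ (g+(H ∪ L))` and `|H| = |L|`. -/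
theorem geom_lemma_structure {G : Type*} [AddCommGroup G]
    (S : Set G) (hS : S.Finite) (H L : AddSubgroup G)
    (hHfin : (H : Set G).Finite) (hLfin : (L : Set G).Finite)
    (hcard : ((L : Set G)).ncard ≤ ((H : Set G)).ncard)
    (hne : S + (H : Set G) ≠ S + (H : Set G) + (L : Set G))
    (hmax : max (((S + (H : Set G)).ncard : ℤ) - ((H : Set G)).ncard)
        (((S + (L : Set G)).ncard : ℤ) - ((L : Set G)).ncard)
      ≤ ((S + ((H ⊓ L : AddSubgroup G) : Set G)).ncard : ℤ)
          - (((H ⊓ L : AddSubgroup G) : Set G)).ncard) :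
    ∃ g : G,
      (∃ C : Set G,
        (S + ((H ⊓ L : AddSubgroup G) : Set G)) \ ({g} + ((H : Set G) + (L : Set G)))
          = ⋃ c ∈ C, ({c} + ((H : Set G) + (L : Set G)))) ∧
      (((S + ((H ⊓ L : AddSubgroup G) : Set G)) ∩ ({g} + ((H : Set G) + (L : Set G)))
          = {g} + ((H ⊓ L : AddSubgroup G) : Set G))
        ∨ ((S + ((H ⊓ L : AddSubgroup G) : Set G)) ∩ ({g} + ((H : Set G) + (L : Set G)))
            = ({g} + ((H : Set G) + (L : Set G))) \ ({g} + ((H : Set G) ∪ (L : Set G)))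
          ∧ ((H : Set G)).ncard = ((L : Set G)).ncard)) := by
  classical
  set I : AddSubgroup G := H ⊓ L with hIdef
  set Kg : AddSubgroup G := H ⊔ L with hKgdef
  have hKco : (H:Set G) + (L:Set G) = (Kg : Set G) := (AddSubgroup.normal_add H L).symm
  rw [hKco]
  have hIfin : (I:Set G).Finite :=
    hHfin.subset (by intro x hx; exact (AddSubgroup.mem_inf.1 hx).1)
  have hKfin : (Kg:Set G).Finite := by rw [← hKco]; exact hHfin.add hLfin
  have hHK : H ≤ Kg := le_sup_left
  have hLK : L ≤ Kg := le_sup_right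
  have hIH : I ≤ H := inf_le_left
  have hIL : I ≤ L := inf_le_right
  have hIK : I ≤ Kg := le_trans hIH hHK
  set T : Set G := S + (I:Set G) with hTdef
  have hTfin : T.Finite := hS.add hIfin
  have hIHset : (I:Set G) + (H:Set G) = (H:Set G) := by
    rw [add_comm]; exact subgroup_set_add_of_le hIH
  have hILset : (I:Set G) + (L:Set G) = (L:Set G) := by
    rw [add_comm]; exact subgroup_set_add_of_le hIL
  have hIKset : (I:Set G) + (Kg:Set G) = (Kg:Set G) := by
    rw [add_comm]; exact subgroup_set_add_of_le hIK
  have hTI : T + (I:Set G) = T := by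
    rw [hTdef, add_assoc, subgroup_set_add_of_le (le_refl I)]
  have hTH : T + (H:Set G) = S + (H:Set G) := by rw [hTdef, add_assoc, hIHset]
  have hTL : T + (L:Set G) = S + (L:Set G) := by rw [hTdef, add_assoc, hILset]
  have hTK : T + (Kg:Set G) = S + (H:Set G) + (L:Set G) := by
    rw [hTdef, add_assoc, hIKset, ← hKco, ← add_assoc]
  -- global budgets
  have hmax1 := le_trans (le_max_left _ _) hmax
  have hmax2 := le_trans (le_max_right _ _) hmax
  have bH : (T + (H:Set G)).ncard + (I:Set G).ncard ≤ T.ncard + (H:Set G).ncard := by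
    rw [hTH]; omega
  have bL : (T + (L:Set G)).ncard + (I:Set G).ncard ≤ T.ncard + (L:Set G).ncard := by
    rw [hTL]; omega
  -- find a bad coset
  have hne' : T + (H:Set G) ≠ T + (Kg:Set G) := by rw [hTH, hTK]; exact hne
  have hsubHK : T + (H:Set G) ⊆ T + (Kg:Set G) := by
    rintro w ⟨t0, ht0, y, hy, rfl⟩; exact ⟨t0, ht0, y, hHK hy, rfl⟩
  have hnotsub : ¬ (T + (Kg:Set G) ⊆ T + (H:Set G)) :=
    fun hss => hne' (subset_antisymm hsubHK hss)
  obtain ⟨z, hzK, hzH⟩ := Set.not_subset.1 hnotsub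
  obtain ⟨t, ht, y, hy, hzsum⟩ := hzK
  have hzQ : z ∈ ({t}:Set G) + (Kg:Set G) := by
    rw [mem_singleton_add, ← hzsum]
    simpa using hy
  have htX : t ∈ T ∩ (({t}:Set G) + (Kg:Set G)) := ⟨ht, mem_coset_self t Kg⟩
  set X : Set G := T ∩ (({t}:Set G) + (Kg:Set G)) with hXdef
  have hXfin : X.Finite := hTfin.subset Set.inter_subset_left
  have hQfin : (({t}:Set G) + (Kg:Set G)).Finite := singleton_add_finite hKfin t
  have hQper : (({t}:Set G) + (Kg:Set G)) + (Kg:Set G) ⊆ ({t}:Set G) + (Kg:Set G) :=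
    (coset_add_subgroup_of_le (le_refl Kg) t).subset
  have hXI : X + (I:Set G) ⊆ X := by
    rintro w ⟨a, ha, b, hb, rfl⟩
    constructor
    · rw [← hTI]; exact ⟨a, ha.1, b, hb, rfl⟩
    · exact (coset_add_subgroup_of_le hIK t).subset ⟨a, ha.2, b, hb, rfl⟩
  have hXHper : (X + (H:Set G)) + (H:Set G) ⊆ X + (H:Set G) := by
    rw [add_assoc, subgroup_set_add_of_le (le_refl H)]
  have hXLper : (X + (L:Set G)) + (L:Set G) ⊆ X + (L:Set G) := by
    rw [add_assoc, subgroup_set_add_of_le (le_refl L)]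
  have hXHQ : X + (H:Set G) ⊆ ({t}:Set G) + (Kg:Set G) := inter_coset_add_subset hHK T t
  have hXLQ : X + (L:Set G) ⊆ ({t}:Set G) + (Kg:Set G) := inter_coset_add_subset hLK T t
  have hXHfin : (X + (H:Set G)).Finite := hXfin.add hHfin
  have hXLfin : (X + (L:Set G)).Finite := hXfin.add hLfin
  have hzXH : z ∉ X + (H:Set G) := by
    intro hzx
    exact hzH (Set.add_subset_add_right (Set.inter_subset_left : X ⊆ T) hzx)
  -- cardinal abbreviations
  have hQcard : (({t}:Set G) + (Kg:Set G)).ncard = (Kg:Set G).ncard := singleton_add_ncard t _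
  have ipos : 0 < (I:Set G).ncard := (Set.ncard_pos hIfin).2 ⟨0, I.zero_mem⟩
  have hpos : 0 < (H:Set G).ncard := (Set.ncard_pos hHfin).2 ⟨0, H.zero_mem⟩
  have lpos : 0 < (L:Set G).ncard := (Set.ncard_pos hLfin).2 ⟨0, L.zero_mem⟩
  have kpos : 0 < (Kg:Set G).ncard := (Set.ncard_pos hKfin).2 ⟨0, Kg.zero_mem⟩
  -- divisibilities
  have hdvd_h : (I:Set G).ncard ∣ (H:Set G).ncard :=
    periodic_ncard_dvd I hIfin _ (H:Set G) hHfin (subgroup_set_add_of_le hIH).subset rfl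
  have hdvd_l : (I:Set G).ncard ∣ (L:Set G).ncard :=
    periodic_ncard_dvd I hIfin _ (L:Set G) hLfin (subgroup_set_add_of_le hIL).subset rfl
  have hdvd_x : (I:Set G).ncard ∣ X.ncard :=
    periodic_ncard_dvd I hIfin _ X hXfin hXI rfl
  have hdvd_p : (H:Set G).ncard ∣ (X + (H:Set G)).ncard :=
    periodic_ncard_dvd H hHfin _ _ hXHfin hXHper rfl
  have hdvd_q : (L:Set G).ncard ∣ (X + (L:Set G)).ncard :=
    periodic_ncard_dvd L hLfin _ _ hXLfin hXLper rfl
  -- |Kg| * |I| = |H| * |L|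
  have hzeroK : (Kg:Set G) ⊆ ({0}:Set G) + (Kg:Set G) := by
    intro w hw; rw [mem_singleton_add]; simpa using hw
  have hKH : (Kg:Set G) + (H:Set G) ⊆ (Kg:Set G) := (subgroup_set_add_of_le hHK).subset
  have hKL : (Kg:Set G) + (L:Set G) ⊆ (Kg:Set G) := (subgroup_set_add_of_le hLK).subset
  have hkl : (Kg:Set G).ncard * (I:Set G).ncard = (H:Set G).ncard * (L:Set G).ncard := by
    have hC := periodic_inter_periodic_ncard H L hHfin hLfin (Kg:Set G).ncard
      (Kg:Set G) (Kg:Set G) 0 hKfin hKfin hKH hKL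
      hzeroK hzeroK rfl
    rw [Set.inter_self] at hC
    rw [← hIdef] at hC
    have heq : (Kg:Set G).ncard * ((H:Set G).ncard * (L:Set G).ncard)
        = (Kg:Set G).ncard * ((Kg:Set G).ncard * (I:Set G).ncard) := by
      calc (Kg:Set G).ncard * ((H:Set G).ncard * (L:Set G).ncard)
          = (Kg:Set G).ncard * (H:Set G).ncard * (L:Set G).ncard := by ring
        _ = (Kg:Set G).ncard * (Kg:Set G).ncard * (I:Set G).ncard := hC
        _ = (Kg:Set G).ncard * ((Kg:Set G).ncard * (I:Set G).ncard) := by ring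
    exact (Nat.eq_of_mul_eq_mul_left kpos heq).symm
  -- local budgets
  have hd1H := delta_one hHK hHfin hTfin t
  have hd1L := delta_one hLK hLfin hTfin t
  have bHloc : (X + (H:Set G)).ncard + (I:Set G).ncard ≤ X.ncard + (H:Set G).ncard := by
    rw [hXdef]; omega
  have bLloc : (X + (L:Set G)).ncard + (I:Set G).ncard ≤ X.ncard + (L:Set G).ncard := by
    rw [hXdef]; omega
  -- grid bound
  have hgridC := periodic_inter_periodic_ncard H L hHfin hLfin (X + (H:Set G)).ncard
    (X + (H:Set G)) (X + (L:Set G)) t hXHfin hXLfin hXHper hXLper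
    hXHQ hXLQ rfl
  have hgridC' : ((X + (H:Set G)) ∩ (X + (L:Set G))).ncard * (H:Set G).ncard * (L:Set G).ncard
      = (X + (H:Set G)).ncard * (X + (L:Set G)).ncard * (I:Set G).ncard := by
    rw [← hIdef] at hgridC; exact hgridC
  have hXsubgrid : X ⊆ (X + (H:Set G)) ∩ (X + (L:Set G)) :=
    Set.subset_inter (subset_add_subgroup X H) (subset_add_subgroup X L)
  have hgrid : X.ncard * (H:Set G).ncard * (L:Set G).ncard
      ≤ (X + (H:Set G)).ncard * (X + (L:Set G)).ncard * (I:Set G).ncard := by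
    rw [← hgridC']
    have := Set.ncard_le_ncard hXsubgrid (hXHfin.subset Set.inter_subset_left)
    exact Nat.mul_le_mul_right _ (Nat.mul_le_mul_right _ this)
  -- lower bounds
  have hxi : (I:Set G).ncard ≤ X.ncard := by
    have hsub : ({t}:Set G) + (I:Set G) ⊆ X := coset_subset_of_periodic hXI htX
    calc (I:Set G).ncard = (({t}:Set G) + (I:Set G)).ncard := (singleton_add_ncard t _).symm
      _ ≤ X.ncard := Set.ncard_le_ncard hsub hXfin
  have hph : (H:Set G).ncard ≤ (X + (H:Set G)).ncard := by
    have htXH : t ∈ X + (H:Set G) := subset_add_subgroup X H htX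
    have hsub : ({t}:Set G) + (H:Set G) ⊆ X + (H:Set G) :=
      coset_subset_of_periodic hXHper htXH
    calc (H:Set G).ncard = (({t}:Set G) + (H:Set G)).ncard := (singleton_add_ncard t _).symm
      _ ≤ (X + (H:Set G)).ncard := Set.ncard_le_ncard hsub hXHfin
  have hql : (L:Set G).ncard ≤ (X + (L:Set G)).ncard := by
    have htXL : t ∈ X + (L:Set G) := subset_add_subgroup X L htX
    have hsub : ({t}:Set G) + (L:Set G) ⊆ X + (L:Set G) :=
      coset_subset_of_periodic hXLper htXL
    calc (L:Set G).ncard = (({t}:Set G) + (L:Set G)).ncard := (singleton_add_ncard t _).symm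
      _ ≤ (X + (L:Set G)).ncard := Set.ncard_le_ncard hsub hXLfin
  -- strict bound from the bad coset
  have hpk : (X + (H:Set G)).ncard < (Kg:Set G).ncard := by
    have hss : X + (H:Set G) ⊂ ({t}:Set G) + (Kg:Set G) :=
      hXHQ.ssubset_of_ne (fun e => hzXH (e ▸ hzQ))
    have := Set.ncard_lt_ncard hss hQfin
    omega
  -- unit extraction
  obtain ⟨h1, hh1⟩ := hdvd_h
  obtain ⟨l1, hl1⟩ := hdvd_l
  obtain ⟨x1, hx1⟩ := hdvd_x
  obtain ⟨b1, hb1⟩ := hdvd_p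
  obtain ⟨a1, ha1⟩ := hdvd_q
  have h1pos : 0 < h1 := by
    rcases Nat.eq_zero_or_pos h1 with rfl | hp
    · rw [Nat.mul_zero] at hh1; omega
    · exact hp
  have l1pos : 0 < l1 := by
    rcases Nat.eq_zero_or_pos l1 with rfl | hp
    · rw [Nat.mul_zero] at hl1; omega
    · exact hp
  have hkval : (Kg:Set G).ncard = (I:Set G).ncard * h1 * l1 := by
    have e1 : (I:Set G).ncard * (Kg:Set G).ncard
        = (I:Set G).ncard * ((I:Set G).ncard * h1 * l1) := by
      calc (I:Set G).ncard * (Kg:Set G).ncard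
          = (Kg:Set G).ncard * (I:Set G).ncard := by ring
        _ = (H:Set G).ncard * (L:Set G).ncard := hkl
        _ = (I:Set G).ncard * ((I:Set G).ncard * h1 * l1) := by rw [hh1, hl1]; ring
    exact Nat.eq_of_mul_eq_mul_left ipos e1
  have u_lh : l1 ≤ h1 := by
    rw [hh1, hl1] at hcard
    exact Nat.le_of_mul_le_mul_left hcard ipos
  have u_b : 1 ≤ b1 := by
    rcases Nat.eq_zero_or_pos b1 with rfl | hp
    · rw [Nat.mul_zero] at hb1; omega
    · exact hp
  have u_a : 1 ≤ a1 := by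
    rcases Nat.eq_zero_or_pos a1 with rfl | hp
    · rw [Nat.mul_zero] at ha1; omega
    · exact hp
  have u_x : 1 ≤ x1 := by
    rcases Nat.eq_zero_or_pos x1 with rfl | hp
    · rw [Nat.mul_zero] at hx1; omega
    · exact hp
  have u_bl : b1 + 1 ≤ l1 := by
    rw [hb1, hh1, hkval] at hpk
    have : (I:Set G).ncard * h1 * b1 < (I:Set G).ncard * h1 * l1 := hpk
    have hb' := Nat.lt_of_mul_lt_mul_left this
    omega
  have u_H : h1 * b1 + 1 ≤ x1 + h1 := by
    refine Nat.le_of_mul_le_mul_left ?_ ipos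
    rw [hb1, hh1, hx1] at bHloc
    have e1 : (I:Set G).ncard * (h1 * b1 + 1)
        = (I:Set G).ncard * h1 * b1 + (I:Set G).ncard := by ring
    have e2 : (I:Set G).ncard * (x1 + h1)
        = (I:Set G).ncard * x1 + (I:Set G).ncard * h1 := by ring
    linarith [bHloc]
  have u_L : l1 * a1 + 1 ≤ x1 + l1 := by
    refine Nat.le_of_mul_le_mul_left ?_ ipos
    rw [ha1, hl1, hx1] at bLloc
    have e1 : (I:Set G).ncard * (l1 * a1 + 1)
        = (I:Set G).ncard * l1 * a1 + (I:Set G).ncard := by ring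
    have e2 : (I:Set G).ncard * (x1 + l1)
        = (I:Set G).ncard * x1 + (I:Set G).ncard * l1 := by ring
    linarith [bLloc]
  have u_xab : x1 ≤ a1 * b1 := by
    have cpos : 0 < (I:Set G).ncard * (I:Set G).ncard * (I:Set G).ncard * h1 * l1 := by
      positivity
    refine Nat.le_of_mul_le_mul_left ?_ cpos
    rw [hb1, ha1, hh1, hl1, hx1] at hgrid
    have e1 : (I:Set G).ncard * (I:Set G).ncard * (I:Set G).ncard * h1 * l1 * x1
        = (I:Set G).ncard * x1 * ((I:Set G).ncard * h1) * ((I:Set G).ncard * l1) := by ring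
    have e2 : (I:Set G).ncard * (I:Set G).ncard * (I:Set G).ncard * h1 * l1 * (a1 * b1)
        = (I:Set G).ncard * h1 * b1 * ((I:Set G).ncard * l1 * a1) * (I:Set G).ncard := by ring
    linarith [hgrid]
  obtain ⟨⟨eH, eL⟩, hbr⟩ := geom_arith h1 l1 a1 b1 x1 u_lh u_a u_b u_bl u_x u_xab u_H u_L
  -- raw exact budgets
  have rawH : (X + (H:Set G)).ncard + (I:Set G).ncard = X.ncard + (H:Set G).ncard := by
    rw [hb1, hh1, hx1]
    have e0 : (I:Set G).ncard * (h1 * b1 + 1) = (I:Set G).ncard * (x1 + h1) := by rw [eH]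
    have e1 : (I:Set G).ncard * (h1 * b1 + 1)
        = (I:Set G).ncard * h1 * b1 + (I:Set G).ncard := by ring
    have e2 : (I:Set G).ncard * (x1 + h1)
        = (I:Set G).ncard * x1 + (I:Set G).ncard * h1 := by ring
    linarith
  have rawL : (X + (L:Set G)).ncard + (I:Set G).ncard = X.ncard + (L:Set G).ncard := by
    rw [ha1, hl1, hx1]
    have e0 : (I:Set G).ncard * (l1 * a1 + 1) = (I:Set G).ncard * (x1 + l1) := by rw [eL]
    have e1 : (I:Set G).ncard * (l1 * a1 + 1)
        = (I:Set G).ncard * l1 * a1 + (I:Set G).ncard := by ring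
    have e2 : (I:Set G).ncard * (x1 + l1)
        = (I:Set G).ncard * x1 + (I:Set G).ncard * l1 := by ring
    linarith
  -- absorption of other cosets
  have habsorb : ∀ yy, yy ∈ T → yy ∉ ({t}:Set G) + (Kg:Set G) →
      ({yy}:Set G) + (Kg:Set G) ⊆ T := by
    intro yy hyT hyQ
    have hdHraw := delta_two hHK hHfin hTfin (t1 := t) (t2 := yy) hyQ
    have hdLraw := delta_two hLK hLfin hTfin (t1 := t) (t2 := yy) hyQ
    have hYfin : (T ∩ (({yy}:Set G) + (Kg:Set G))).Finite := hTfin.subset Set.inter_subset_left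
    have hYHfin : ((T ∩ (({yy}:Set G) + (Kg:Set G))) + (H:Set G)).Finite := hYfin.add hHfin
    have hYLfin : ((T ∩ (({yy}:Set G) + (Kg:Set G))) + (L:Set G)).Finite := hYfin.add hLfin
    have hdH' : (X + (H:Set G)).ncard + ((T ∩ (({yy}:Set G) + (Kg:Set G))) + (H:Set G)).ncard
        + T.ncard ≤ (T + (H:Set G)).ncard + X.ncard
          + (T ∩ (({yy}:Set G) + (Kg:Set G))).ncard := hdHraw
    have hdL' : (X + (L:Set G)).ncard + ((T ∩ (({yy}:Set G) + (Kg:Set G))) + (L:Set G)).ncard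
        + T.ncard ≤ (T + (L:Set G)).ncard + X.ncard
          + (T ∩ (({yy}:Set G) + (Kg:Set G))).ncard := hdLraw
    have hYHle : ((T ∩ (({yy}:Set G) + (Kg:Set G))) + (H:Set G)).ncard
        ≤ (T ∩ (({yy}:Set G) + (Kg:Set G))).ncard := by omega
    have hYLle : ((T ∩ (({yy}:Set G) + (Kg:Set G))) + (L:Set G)).ncard
        ≤ (T ∩ (({yy}:Set G) + (Kg:Set G))).ncard := by omega
    have hYHeq : T ∩ (({yy}:Set G) + (Kg:Set G))
        = (T ∩ (({yy}:Set G) + (Kg:Set G))) + (H:Set G) :=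
      Set.eq_of_subset_of_ncard_le (subset_add_subgroup _ H) hYHle hYHfin
    have hYLeq : T ∩ (({yy}:Set G) + (Kg:Set G))
        = (T ∩ (({yy}:Set G) + (Kg:Set G))) + (L:Set G) :=
      Set.eq_of_subset_of_ncard_le (subset_add_subgroup _ L) hYLle hYLfin
    intro w hw
    rw [mem_singleton_add] at hw
    have hw' : w - yy ∈ (H:Set G) + (L:Set G) := by rw [hKco]; exact hw
    obtain ⟨hh, hhm, ll, llm, hsum⟩ := hw'
    have hyY : yy ∈ T ∩ (({yy}:Set G) + (Kg:Set G)) := ⟨hyT, mem_coset_self yy Kg⟩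
    have hstep1 : yy + hh ∈ T ∩ (({yy}:Set G) + (Kg:Set G)) := by
      rw [hYHeq]; exact ⟨yy, hyY, hh, hhm, rfl⟩
    have hstep2 : (yy + hh) + ll ∈ T ∩ (({yy}:Set G) + (Kg:Set G)) := by
      rw [hYLeq]; exact ⟨yy + hh, hstep1, ll, llm, rfl⟩
    have hs : hh + ll = w - yy := hsum
    have hweq : w = yy + hh + ll := by
      have h3 : w = hh + ll + yy := sub_eq_iff_eq_add.mp hs.symm
      rw [h3]; abel
    have : yy + hh + ll ∈ T := hstep2.1
    rwa [← hweq] at this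
  -- union-of-cosets component
  have hunion : ∀ g0, g0 ∈ ({t}:Set G) + (Kg:Set G) →
      T \ (({g0}:Set G) + (Kg:Set G))
        = ⋃ c ∈ T \ (({g0}:Set G) + (Kg:Set G)), (({c}:Set G) + (Kg:Set G)) := by
    intro g0 hg0
    have hQg : ({g0}:Set G) + (Kg:Set G) = ({t}:Set G) + (Kg:Set G) := coset_eq_of_mem hg0
    rw [hQg]
    ext w
    simp only [Set.mem_iUnion, Set.mem_diff, exists_prop]
    constructor
    · intro hw
      exact ⟨w, ⟨hw.1, hw.2⟩, mem_coset_self w Kg⟩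
    · rintro ⟨c, ⟨hcT, hcQ⟩, hwc⟩
      refine ⟨habsorb c hcT hcQ hwc, ?_⟩
      intro hwQ
      have e1 := (coset_eq_of_mem hwc).symm.trans (coset_eq_of_mem hwQ)
      exact hcQ (e1 ▸ mem_coset_self c Kg)
  rcases hbr with ⟨ha1e, hb1e, hx1e⟩ | ⟨hhl1, ha1e, hb1e, hx1e⟩
  · -- case (i): singleton coset of I
    have hxeq : X.ncard = (I:Set G).ncard := by rw [hx1, hx1e]; ring
    have hXeq : ({t}:Set G) + (I:Set G) = X :=
      Set.eq_of_subset_of_ncard_le (coset_subset_of_periodic hXI htX)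
        (by rw [singleton_add_ncard]; omega) hXfin
    exact ⟨t, ⟨T \ (({t}:Set G) + (Kg:Set G)), hunion t (mem_coset_self t Kg)⟩,
      Or.inl hXeq.symm⟩
  · -- case (ii): complement of a cross
    have hHL : (H:Set G).ncard = (L:Set G).ncard := by rw [hh1, hl1, hhl1]
    -- X equals the full grid intersection
    have hgridcard : ((X + (H:Set G)) ∩ (X + (L:Set G))).ncard = X.ncard := by
      have e3 : (X + (H:Set G)).ncard * (X + (L:Set G)).ncard * (I:Set G).ncard
          = X.ncard * (H:Set G).ncard * (L:Set G).ncard := by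
        rw [hb1, ha1, hh1, hl1, hx1, hx1e]; ring
      have e4 : ((X + (H:Set G)) ∩ (X + (L:Set G))).ncard * (H:Set G).ncard * (L:Set G).ncard
          = X.ncard * (H:Set G).ncard * (L:Set G).ncard := by rw [hgridC', e3]
      have e5 := Nat.eq_of_mul_eq_mul_right lpos e4
      exact Nat.eq_of_mul_eq_mul_right hpos e5
    have hXeqgrid : X = (X + (H:Set G)) ∩ (X + (L:Set G)) :=
      Set.eq_of_subset_of_ncard_le hXsubgrid (le_of_eq hgridcard)
        (hXHfin.subset Set.inter_subset_left)
    -- the missing H-coset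
    have hQHper : (({t}:Set G) + (Kg:Set G)) + (H:Set G) ⊆ ({t}:Set G) + (Kg:Set G) :=
      (coset_add_subgroup_of_le hHK t).subset
    have hQLper : (({t}:Set G) + (Kg:Set G)) + (L:Set G) ⊆ ({t}:Set G) + (Kg:Set G) :=
      (coset_add_subgroup_of_le hLK t).subset
    have hZHper := diff_periodic hQHper hXHper
    have hZLper := diff_periodic hQLper hXLper
    have hZHfin : ((({t}:Set G) + (Kg:Set G)) \ (X + (H:Set G))).Finite := hQfin.diff
    have hZLfin : ((({t}:Set G) + (Kg:Set G)) \ (X + (L:Set G))).Finite := hQfin.diff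
    have hkp : (Kg:Set G).ncard = (X + (H:Set G)).ncard + (H:Set G).ncard := by
      have e' : l1 = b1 + 1 := hb1e.symm
      rw [hkval, hb1, hh1, e']; ring
    have hkq : (Kg:Set G).ncard = (X + (L:Set G)).ncard + (L:Set G).ncard := by
      have e' : l1 = a1 + 1 := by omega
      rw [hkval, ha1, hl1, hhl1, e']; ring
    have hZHcard : ((({t}:Set G) + (Kg:Set G)) \ (X + (H:Set G))).ncard = (H:Set G).ncard := by
      have := Set.ncard_diff_add_ncard_of_subset hXHQ hQfin
      omega
    have hZLcard : ((({t}:Set G) + (Kg:Set G)) \ (X + (L:Set G))).ncard = (L:Set G).ncard := by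
      have := Set.ncard_diff_add_ncard_of_subset hXLQ hQfin
      omega
    obtain ⟨c, hc⟩ : ((({t}:Set G) + (Kg:Set G)) \ (X + (H:Set G))).Nonempty :=
      Set.nonempty_of_ncard_ne_zero (by omega)
    obtain ⟨d, hd⟩ : ((({t}:Set G) + (Kg:Set G)) \ (X + (L:Set G))).Nonempty :=
      Set.nonempty_of_ncard_ne_zero (by omega)
    have hZHeq : ({c}:Set G) + (H:Set G) = (({t}:Set G) + (Kg:Set G)) \ (X + (H:Set G)) :=
      Set.eq_of_subset_of_ncard_le (coset_subset_of_periodic hZHper hc)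
        (by rw [singleton_add_ncard]; omega) hZHfin
    have hZLeq : ({d}:Set G) + (L:Set G) = (({t}:Set G) + (Kg:Set G)) \ (X + (L:Set G)) :=
      Set.eq_of_subset_of_ncard_le (coset_subset_of_periodic hZLper hd)
        (by rw [singleton_add_ncard]; omega) hZLfin
    obtain ⟨e, he⟩ := coset_inter_coset H L (g := t) hc.1 hd.1
    have hem : e ∈ (({c}:Set G) + (H:Set G)) ∩ (({d}:Set G) + (L:Set G)) := by
      rw [he]; exact mem_coset_self e (H ⊓ L)
    have heH : ({e}:Set G) + (H:Set G) = (({t}:Set G) + (Kg:Set G)) \ (X + (H:Set G)) :=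
      (coset_eq_of_mem hem.1).trans hZHeq
    have heL : ({e}:Set G) + (L:Set G) = (({t}:Set G) + (Kg:Set G)) \ (X + (L:Set G)) :=
      (coset_eq_of_mem hem.2).trans hZLeq
    have heQ : e ∈ ({t}:Set G) + (Kg:Set G) := by
      have h1 : e ∈ ({e}:Set G) + (H:Set G) := mem_coset_self e H
      rw [heH] at h1
      exact h1.1
    have hQe : ({e}:Set G) + (Kg:Set G) = ({t}:Set G) + (Kg:Set G) := coset_eq_of_mem heQ
    refine ⟨e, ⟨T \ (({e}:Set G) + (Kg:Set G)), ?_⟩, Or.inr ⟨?_, hHL⟩⟩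
    · rw [hQe]; exact hunion t (mem_coset_self t Kg)
    · rw [hQe]
      have hcross : ({e}:Set G) + ((H:Set G) ∪ (L:Set G))
          = (({e}:Set G) + (H:Set G)) ∪ (({e}:Set G) + (L:Set G)) := Set.add_union
      calc T ∩ (({t}:Set G) + (Kg:Set G)) = X := rfl
        _ = (X + (H:Set G)) ∩ (X + (L:Set G)) := hXeqgrid
        _ = ((({t}:Set G) + (Kg:Set G)) \ ((({t}:Set G) + (Kg:Set G)) \ (X + (H:Set G))))
            ∩ ((({t}:Set G) + (Kg:Set G)) \ ((({t}:Set G) + (Kg:Set G)) \ (X + (L:Set G)))) := by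
          rw [Set.diff_diff_cancel_left hXHQ, Set.diff_diff_cancel_left hXLQ]
        _ = (({t}:Set G) + (Kg:Set G))
            \ (((({t}:Set G) + (Kg:Set G)) \ (X + (H:Set G)))
              ∪ ((({t}:Set G) + (Kg:Set G)) \ (X + (L:Set G)))) := Set.diff_inter_diff
        _ = (({t}:Set G) + (Kg:Set G)) \ (({e}:Set G) + ((H:Set G) ∪ (L:Set G))) := by
          rw [hcross, heH, heL]
end

section
/- Let G be a finite abelian group, S ⊂ G a proper subset, and suppose subgroups L ≤ G₀ ≤ G and g₀ ∈ G₀ satisfy: G₀/L is a cyclic 2-group of order ≥ 4 generated by g₀+L; G/G₀ is an elementary abelian 2-group; exp(G/L) = exp(G₀/L); S + L = (G ∖ G₀) ∪ (g₀+L); S ∩ (g₀+L) is not contained in a coset of a proper subgroup of L; and |S+L| − |S| ≤ |L| − 1. If H ≤ G satisfies |S+H| − |S| ≤ |H| − 1 and S + H ≠ G, then H ≤ G₀. -/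
open Pointwise

private lemma card_map_mul {G : Type*} [AddCommGroup G] (L G₀ : AddSubgroup G) (hLG₀ : L ≤ G₀) :
    Nat.card (G₀.map (QuotientAddGroup.mk' L)) * Nat.card L = Nat.card G₀ := by
  set φ := (QuotientAddGroup.mk' L).comp G₀.subtype with hφ
  have hrange : φ.range = G₀.map (QuotientAddGroup.mk' L) := by
    rw [hφ, AddMonoidHom.range_comp, AddSubgroup.range_subtype]
  have hker : φ.ker = L.addSubgroupOf G₀ := by
    rw [hφ, ← AddMonoidHom.comap_ker, QuotientAddGroup.ker_mk']; rfl
  have h1 : Nat.card G₀ = Nat.card (G₀ ⧸ φ.ker) * Nat.card φ.ker :=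
    AddSubgroup.card_eq_card_quotient_mul_card_addSubgroup _
  have h2 : Nat.card (G₀ ⧸ φ.ker) = Nat.card φ.range :=
    Nat.card_congr (QuotientAddGroup.quotientKerEquivRange φ).toEquiv
  have h3 : Nat.card φ.ker = Nat.card L := by
    rw [hker]; exact Nat.card_congr (AddSubgroup.addSubgroupOfEquivOfLe hLG₀).toEquiv
  rw [h1, h2, h3, hrange]

/-- Lemma 3: suppose the proper subset `S ⊂ G`, subgroups `L ≤ G₀ ≤ G` and `g₀ ∈ G₀`
satisfy conditions (L1)–(L4), and moreover `|S+L| − |S| ≤ |L| − 1`. If `H ≤ G` satisfies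
`|S+H| − |S| ≤ |H| − 1` and `S + H ≠ G`, then `H ≤ G₀`. -/
theorem LcapH_lemma {G : Type*} [AddCommGroup G] [Fintype G]
    (S : Set G) (hS : S ≠ Set.univ)
    (L G₀ : AddSubgroup G) (hLG₀ : L ≤ G₀) (g₀ : G) (hg₀ : g₀ ∈ G₀)
    -- (L1): `G₀/L` is a cyclic 2-group of order ≥ 4, generated by `g₀ + L`
    (hL1a : ∃ k : ℕ, Nat.card (G₀.map (QuotientAddGroup.mk' L)) = 2 ^ k)
    (hL1b : 4 ≤ Nat.card (G₀.map (QuotientAddGroup.mk' L)))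
    (hL1c : AddSubgroup.closure {QuotientAddGroup.mk' L g₀} = G₀.map (QuotientAddGroup.mk' L))
    -- (L2): `G/G₀` is an elementary abelian 2-group
    (hL2 : ∀ x : G ⧸ G₀, x + x = 0)
    -- (L3): `exp(G/L) = exp(G₀/L)`
    (hL3 : AddMonoid.exponent (G ⧸ L) = AddMonoid.exponent (G₀.map (QuotientAddGroup.mk' L)))
    -- (L4): `S + L = (G ∖ G₀) ∪ (g₀ + L)` and `S ∩ (g₀+L)` is not contained
    -- in a coset of a proper subgroup of `L`
    (hL4a : S + (L : Set G) = (Set.univ \ (G₀ : Set G)) ∪ ({g₀} + (L : Set G)))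
    (hL4b : ¬ ∃ R : AddSubgroup G, R < L ∧ ∃ x : G, S ∩ ({g₀} + (L : Set G)) ⊆ {x} + (R : Set G))
    -- `|S+L| − |S| ≤ |L| − 1`
    (hSL : ((S + (L : Set G)).ncard : ℤ) - S.ncard ≤ ((L : Set G)).ncard - 1)
    (H : AddSubgroup G)
    (hH : ((S + (H : Set G)).ncard : ℤ) - S.ncard ≤ ((H : Set G)).ncard - 1)
    (hHG : S + (H : Set G) ≠ Set.univ) :
    H ≤ G₀ := by
  classical
  intro h hhH
  by_contra hhG₀
  exfalso
  have h0H : (0:G) ∈ H := H.zero_mem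
  have h0L : (0:G) ∈ L := L.zero_mem
  -- notation for cardinalities
  set nG : ℕ := (Set.univ : Set G).ncard with hnG
  set a : ℕ := S.ncard with ha
  set t : ℕ := (S + (H : Set G)).ncard with ht
  set l : ℕ := ((L : Set G)).ncard with hl
  set g : ℕ := ((G₀ : Set G)).ncard with hg
  set hc : ℕ := ((H : Set G)).ncard with hhc
  -- cardinality of a coset
  have ncoset : ∀ (x : G) (A : Set G), ({x} + A).ncard = A.ncard := by
    intro x A
    rw [Set.singleton_add]
    exact Set.ncard_image_of_injective _ (add_right_injective x)
  have memc : ∀ (x y : G) (A : Set G), y ∈ {x} + A ↔ y - x ∈ A := by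
    intro x y A
    rw [Set.singleton_add]
    constructor
    · rintro ⟨a, ha, rfl⟩; simpa using ha
    · intro hy; exact ⟨y - x, hy, by simp⟩
  have hg0Lsub : {g₀} + (L : Set G) ⊆ (G₀ : Set G) := by
    intro x hx
    rw [memc] at hx
    have := G₀.add_mem hg₀ (hLG₀ hx)
    simpa using this
  -- E1 : |S+L| = nG - g + l (as ℤ)
  have hgle : g ≤ nG := Set.ncard_le_ncard (Set.subset_univ _) (Set.toFinite _)
  have E1 : ((S + (L : Set G)).ncard : ℤ) = (nG : ℤ) - g + l := by
    rw [hL4a, Set.ncard_union_eq (Set.disjoint_sdiff_left.mono_right hg0Lsub),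
      Set.ncard_diff (Set.subset_univ _), ncoset]
    rw [← hnG, ← hg, ← hl]
    push_cast [Nat.cast_sub hgle]
    ring
  -- E2 : a ≥ nG - g + 1
  have E2 : (nG : ℤ) - g + 1 ≤ (a : ℤ) := by
    rw [E1] at hSL
    linarith
  -- E3 : 4 * l ≤ g
  have hcardL : Nat.card L = l := by
    rw [hl, ← Nat.card_coe_set_eq]; rfl
  have hcardG₀ : Nat.card G₀ = g := by
    rw [hg, ← Nat.card_coe_set_eq]; rfl
  have E3 : 4 * l ≤ g := by
    have := card_map_mul L G₀ hLG₀
    rw [hcardL, hcardG₀] at this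
    calc 4 * l ≤ Nat.card (G₀.map (QuotientAddGroup.mk' L)) * l :=
          Nat.mul_le_mul_right l hL1b
      _ = g := this
  -- S ⊆ S + H and h + S ⊆ S + H
  have hST : S ⊆ S + (H : Set G) := by
    intro s hs
    have := Set.add_mem_add hs h0H
    rwa [add_zero] at this
  have hhST : {h} + S ⊆ S + (H : Set G) := by
    intro x hx
    rw [memc] at hx
    have := Set.add_mem_add hx hhH
    simpa using this
  have hat : a ≤ t := Set.ncard_le_ncard hST (Set.toFinite _)
  -- E5 : |(S+H) \ S| = t - a
  have E5 : (((S + (H : Set G)) \ S).ncard : ℤ) = (t : ℤ) - a := by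
    rw [Set.ncard_diff hST]
    rw [← ht, ← ha]
    push_cast [Nat.cast_sub hat]
    ring
  -- E7 : |S ∩ (h+S)| ≥ 2a - t
  have hdiffsub : ({h} + S) \ S ⊆ (S + (H : Set G)) \ S := Set.diff_subset_diff_left hhST
  have E7 : (2 : ℤ) * a - t ≤ ((S ∩ ({h} + S)).ncard : ℤ) := by
    have e1 : (({h} + S) ∩ S).ncard + (({h} + S) \ S).ncard = ({h} + S).ncard :=
      Set.ncard_inter_add_ncard_diff_eq_ncard _ _
    have e2 : (({h} + S) \ S).ncard ≤ ((S + (H : Set G)) \ S).ncard :=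
      Set.ncard_le_ncard hdiffsub (Set.toFinite _)
    have e3 : ({h} + S).ncard = a := ncoset h S
    have e4 : (({h} + S) ∩ S) = S ∩ ({h} + S) := Set.inter_comm _ _
    rw [e4, e3] at e1
    have e5 : ((({h} + S) \ S).ncard : ℤ) ≤ (t : ℤ) - a := by rw [← E5]; exact_mod_cast e2
    have e6 : ((S ∩ ({h} + S)).ncard : ℤ) + (({h} + S) \ S).ncard = (a : ℤ) := by
      exact_mod_cast e1
    linarith
  -- E8 : S ∩ (h+S) ⊆ U
  set U : Set G := ((Set.univ \ ((G₀ : Set G) ∪ ({h} + (G₀ : Set G)))) ∪ ({g₀} + (L : Set G)))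
      ∪ ({g₀ + h} + (L : Set G)) with hU
  have memSL : ∀ x ∈ S, x ∈ (Set.univ \ (G₀ : Set G)) ∪ ({g₀} + (L : Set G)) := by
    intro x hx
    rw [← hL4a]
    have := Set.add_mem_add hx h0L
    rwa [add_zero] at this
  have E8 : S ∩ ({h} + S) ⊆ U := by
    rintro x ⟨hxS, hxhS⟩
    rw [memc] at hxhS
    rcases memSL _ hxS with hx1 | hx1
    · rcases memSL _ hxhS with hs1 | hs1
      · refine Or.inl (Or.inl ⟨Set.mem_univ _, ?_⟩)
        rintro (hxG | hxhG)
        · exact hx1.2 hxG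
        · rw [memc] at hxhG
          exact hs1.2 hxhG
      · refine Or.inr ?_
        rw [memc] at hs1 ⊢
        have : x - (g₀ + h) = x - h - g₀ := by abel
        rw [this]
        exact hs1
    · exact Or.inl (Or.inr hx1)
  -- E9 : |U| = nG - 2g + 2l
  have hdisjG₀ : Disjoint (G₀ : Set G) ({h} + (G₀ : Set G)) := by
    rw [Set.disjoint_left]
    intro x hxG hxhG
    rw [memc] at hxhG
    have := G₀.sub_mem hxG hxhG
    simp only [sub_sub_cancel] at this
    exact hhG₀ this
  have hg0hLsub : {g₀ + h} + (L : Set G) ⊆ {h} + (G₀ : Set G) := by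
    intro x hx
    rw [memc] at hx ⊢
    have := G₀.add_mem hg₀ (hLG₀ hx)
    have heq : g₀ + (x - (g₀ + h)) = x - h := by abel
    rwa [heq] at this
  have hXsub : (G₀ : Set G) ∪ ({h} + (G₀ : Set G)) ⊆ Set.univ := Set.subset_univ _
  have hXcard : ((G₀ : Set G) ∪ ({h} + (G₀ : Set G))).ncard = 2 * g := by
    rw [Set.ncard_union_eq hdisjG₀, ncoset]; omega
  have hXle : 2 * g ≤ nG := by
    rw [← hXcard]
    exact Set.ncard_le_ncard hXsub (Set.toFinite _)
  have hd1 : Disjoint (Set.univ \ ((G₀ : Set G) ∪ ({h} + (G₀ : Set G)))) ({g₀} + (L : Set G)) :=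
    Set.disjoint_sdiff_left.mono_right (hg0Lsub.trans Set.subset_union_left)
  have hd2 : Disjoint ((Set.univ \ ((G₀ : Set G) ∪ ({h} + (G₀ : Set G)))) ∪ ({g₀} + (L : Set G)))
      ({g₀ + h} + (L : Set G)) := by
    apply Set.disjoint_union_left.mpr
    constructor
    · exact Set.disjoint_sdiff_left.mono_right (hg0hLsub.trans Set.subset_union_right)
    · exact (hdisjG₀.mono hg0Lsub hg0hLsub)
  have E9 : (U.ncard : ℤ) = (nG : ℤ) - 2 * g + 2 * l := by
    rw [hU, Set.ncard_union_eq hd2, Set.ncard_union_eq hd1,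
      Set.ncard_diff hXsub, hXcard, ncoset, ncoset]
    rw [← hnG, ← hl]
    push_cast [Nat.cast_sub hXle]
    ring
  -- combine E7, E8, E9 : 2a - t ≤ nG - 2g + 2l
  have E78 : (2 : ℤ) * a - t ≤ (nG : ℤ) - 2 * g + 2 * l := by
    have hle := Set.ncard_le_ncard E8 (Set.toFinite _)
    have hle' := (Nat.cast_le (α := ℤ)).mpr hle
    linarith [E7, E9]
  -- E10 : hc ≤ nG - t
  have E10 : (hc : ℤ) ≤ (nG : ℤ) - t := by
    obtain ⟨c, hcmem⟩ := (Set.ne_univ_iff_exists_notMem _).mp hHG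
    have hsub : {c} + (H : Set G) ⊆ Set.univ \ (S + (H : Set G)) := by
      intro x hx
      rw [memc] at hx
      refine ⟨Set.mem_univ _, ?_⟩
      intro hmem
      obtain ⟨s, hs, k, hk, hsk⟩ := Set.mem_add.mp hmem
      apply hcmem
      have hck : c = s + (k - (x - c)) := by rw [← hsk]; abel
      rw [hck]
      exact Set.add_mem_add hs (H.sub_mem hk hx)
    have h1 : ({c} + (H : Set G)).ncard ≤ (Set.univ \ (S + (H : Set G))).ncard :=
      Set.ncard_le_ncard hsub (Set.toFinite _)
    rw [ncoset, Set.ncard_diff (Set.subset_univ _)] at h1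
    have htle : t ≤ nG := Set.ncard_le_ncard (Set.subset_univ _) (Set.toFinite _)
    omega
  -- final contradiction
  have E3' : (4 : ℤ) * l ≤ (g : ℤ) := by exact_mod_cast E3
  linarith [E2, E78, E10, hH, E3']
end

section
/- Let S ⊆ G with G a finite abelian group, suppose κ(Cay⁺(S)) < |S|, and let A be a fragment of Cay⁺(S). Then A ⊆ S − A. -/
open Pointwise

/-- If `κ(Cay⁺(S)) < |S|` and `A` is a fragment of `Cay⁺(S)`, then `A ⊆ S − A`. -/
theorem fragment_subset {G : Type*} [AddCommGroup G] [Fintype G]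
    (S : Set G) (hκ : vertexConnectivity (addCayley S) < S.ncard)
    (A : Set G) (hA : A.Nonempty)
    (hfrag1 : ((S - A) \ A).ncard = vertexConnectivity (addCayley S))
    (hfrag2 : (S - A) ∪ A ≠ Set.univ) :
    A ⊆ S - A := by
  intro a ha
  by_contra hna
  have hsub : S - {a} ⊆ (S - A) \ A := by
    intro x hx
    rw [Set.sub_singleton] at hx
    obtain ⟨s, hs, rfl⟩ := hx
    refine ⟨Set.sub_mem_sub hs ha, fun hxA => hna ?_⟩
    exact ⟨s, hs, s - a, hxA, by ring_nf; simp⟩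
  have h1 : (S - {a}).ncard = S.ncard := by
    rw [Set.sub_singleton]
    exact Set.ncard_image_of_injective _ (fun x y h => by simpa using h)
  have h2 := Set.ncard_le_ncard hsub (Set.toFinite _)
  omega
end

section
/- Let G be a finite abelian group and S ⊂ G a proper subset with S ∩ (2∗G) ≠ ∅ (in particular this holds whenever G has odd order and S is non-empty). Then κ(Cay⁺(S)) = min{|S+H| − |H| : H ≤ G, S + H ≠ G}. -/
open Pointwise

set_option linter.unusedSectionVars false

namespace CayleyConn

variable {G : Type*} [AddCommGroup G] [Fintype G] [DecidableEq G]

/-- `C` is a fragment for `S`. -/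
def IsFrag (S C : Finset G) : Prop := C.Nonempty ∧ S + C ≠ Finset.univ

def fragVals (S : Finset G) : Set ℕ :=
  {n | ∃ C : Finset G, IsFrag S C ∧ n = (S + C).card - C.card}

noncomputable def kap (S : Finset G) : ℕ := sInf (fragVals S)

lemma card_le_card_add {S : Finset G} (hS : S.Nonempty) (C : Finset G) :
    C.card ≤ (S + C).card := by
  obtain ⟨s₀, hs₀⟩ := hS
  have himg : C.image (s₀ + ·) ⊆ S + C := by
    intro x hx
    obtain ⟨c, hc, rfl⟩ := Finset.mem_image.1 hx
    exact Finset.add_mem_add hs₀ hc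
  calc C.card = (C.image (s₀ + ·)).card :=
        (Finset.card_image_of_injective _ (add_right_injective s₀)).symm
    _ ≤ (S + C).card := Finset.card_le_card himg

lemma frag_zero {S : Finset G} (hSu : S ≠ Finset.univ) : IsFrag S ({0} : Finset G) :=
  ⟨Finset.singleton_nonempty 0, by simpa [Finset.add_singleton] using hSu⟩

lemma fragVals_nonempty {S : Finset G} (hSu : S ≠ Finset.univ) : (fragVals S).Nonempty :=
  ⟨_, ⟨{0}, frag_zero hSu, rfl⟩⟩

lemma kap_le {S : Finset G} (hS : S.Nonempty) {C : Finset G} (h : IsFrag S C) :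
    kap S + C.card ≤ (S + C).card := by
  have h1 : kap S ≤ (S + C).card - C.card := Nat.sInf_le ⟨C, h, rfl⟩
  have h2 := card_le_card_add hS C
  omega

/-- tight fragment -/
def Tight (S C : Finset G) : Prop := IsFrag S C ∧ (S + C).card = kap S + C.card

lemma exists_tight {S : Finset G} (hS : S.Nonempty) (hSu : S ≠ Finset.univ) :
    ∃ C, Tight S C := by
  obtain ⟨C, hC, hval⟩ := Nat.sInf_mem (fragVals_nonempty hSu)
  have h2 := card_le_card_add hS C
  exact ⟨C, hC, by unfold kap; omega⟩

def atomVals (S : Finset G) : Set ℕ := {n | ∃ C, Tight S C ∧ C.card = n}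

noncomputable def atomCard (S : Finset G) : ℕ := sInf (atomVals S)

lemma exists_atom {S : Finset G} (hS : S.Nonempty) (hSu : S ≠ Finset.univ) :
    ∃ A, Tight S A ∧ A.card = atomCard S := by
  obtain ⟨C, hC⟩ := exists_tight hS hSu
  obtain ⟨A, hA, hcard⟩ := Nat.sInf_mem (⟨C.card, C, hC, rfl⟩ : (atomVals S).Nonempty)
  exact ⟨A, hA, hcard⟩

lemma atomCard_le {S C : Finset G} (h : Tight S C) : atomCard S ≤ C.card :=
  Nat.sInf_le ⟨C, h, rfl⟩
lemma neg_ne_univ {S : Finset G} (hSu : S ≠ Finset.univ) : -S ≠ Finset.univ := by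
  intro h
  apply hSu
  have : - -S = -(Finset.univ : Finset G) := by rw [h]
  simpa using this

lemma neg_add_finset (S C : Finset G) : -(S + C) = (-S) + (-C) := by
  ext x
  simp only [Finset.mem_neg, Finset.mem_add]
  constructor
  · rintro ⟨y, ⟨s, hs, c, hc, rfl⟩, rfl⟩
    exact ⟨-s, ⟨s, hs, rfl⟩, -c, ⟨c, hc, rfl⟩, (neg_add s c).symm⟩
  · rintro ⟨s', ⟨s, hs, rfl⟩, c', ⟨c, hc, rfl⟩, rfl⟩
    exact ⟨s + c, ⟨s, hs, c, hc, rfl⟩, (neg_add s c)⟩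

/-- dual fragment basics -/
lemma dual_frag {S C : Finset G} (h : IsFrag S C) :
    IsFrag (-S) (Finset.univ \ (S + C)) ∧
      ((-S) + (Finset.univ \ (S + C))).card + C.card ≤ Fintype.card G := by
  obtain ⟨hCne, hCu⟩ := h
  have hsub : (-S) + (Finset.univ \ (S + C)) ⊆ Finset.univ \ C := by
    intro x hx
    obtain ⟨s', hs', t, ht, rfl⟩ := Finset.mem_add.1 hx
    obtain ⟨s, hs, rfl⟩ := Finset.mem_neg.1 hs'
    rw [Finset.mem_sdiff] at ht
    refine Finset.mem_sdiff.2 ⟨Finset.mem_univ _, fun hmem => ht.2 ?_⟩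
    have : s + (-s + t) ∈ S + C := Finset.add_mem_add hs hmem
    simpa using this
  have hne : (Finset.univ \ (S + C)).Nonempty := by
    rw [Finset.sdiff_nonempty]
    intro hsub'
    exact hCu (Finset.eq_univ_of_card _ (le_antisymm (Finset.card_le_univ _)
      (by simpa [Finset.card_univ] using Finset.card_le_card hsub')))
  have hne2 : (-S) + (Finset.univ \ (S + C)) ≠ Finset.univ := by
    intro he
    obtain ⟨c, hc⟩ := hCne
    have hcm : c ∈ (-S) + (Finset.univ \ (S + C)) := by rw [he]; exact Finset.mem_univ c
    exact (Finset.mem_sdiff.1 (hsub hcm)).2 hc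
  have hcard : ((-S) + (Finset.univ \ (S + C))).card + C.card ≤ Fintype.card G := by
    have h1 := Finset.card_le_card hsub
    have h2 : (Finset.univ \ C).card = Fintype.card G - C.card := by
      rw [Finset.card_sdiff_of_subset (Finset.subset_univ _), Finset.card_univ]
    have h3 : C.card ≤ Fintype.card G := by
      simpa [Finset.card_univ] using Finset.card_le_card (Finset.subset_univ C)
    omega
  exact ⟨⟨hne, hne2⟩, hcard⟩

lemma card_neg_finset (S : Finset G) : (-S).card = S.card :=
  Finset.card_image_of_injective _ neg_injective

lemma kap_neg_le {S : Finset G} (hS : S.Nonempty) (hSu : S ≠ Finset.univ) :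
    kap (-S) ≤ kap S := by
  obtain ⟨C, ⟨hCfrag, hCtight⟩⟩ := exists_tight hS hSu
  obtain ⟨hfrag', hcard'⟩ := dual_frag hCfrag
  have h1 : kap (-S) ≤ ((-S) + (Finset.univ \ (S + C))).card - (Finset.univ \ (S + C)).card :=
    Nat.sInf_le ⟨_, hfrag', rfl⟩
  have h2 : (Finset.univ \ (S + C)).card = Fintype.card G - (S + C).card := by
    rw [Finset.card_sdiff_of_subset (Finset.subset_univ _), Finset.card_univ]
  have h3 : (S + C).card ≤ Fintype.card G := by
    simpa [Finset.card_univ] using Finset.card_le_card (Finset.subset_univ (S + C))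
  have h4 := card_le_card_add hS C
  omega

lemma kap_neg {S : Finset G} (hS : S.Nonempty) (hSu : S ≠ Finset.univ) :
    kap (-S) = kap S := by
  refine le_antisymm (kap_neg_le hS hSu) ?_
  have := kap_neg_le (S := -S) hS.neg (neg_ne_univ hSu)
  simpa using this

/-- the complement of `S+C` for a tight fragment `C` is a tight fragment of `-S`. -/
lemma dual_tight {S C : Finset G} (hS : S.Nonempty) (hSu : S ≠ Finset.univ)
    (h : Tight S C) :
    Tight (-S) (Finset.univ \ (S + C)) ∧
      (Finset.univ \ (S + C)).card = Fintype.card G - (kap S + C.card) := by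
  obtain ⟨hfrag, htight⟩ := h
  obtain ⟨hfrag', hcard'⟩ := dual_frag hfrag
  have h2 : (Finset.univ \ (S + C)).card = Fintype.card G - (S + C).card := by
    rw [Finset.card_sdiff_of_subset (Finset.subset_univ _), Finset.card_univ]
  have h3 : (S + C).card ≤ Fintype.card G := by
    simpa [Finset.card_univ] using Finset.card_le_card (Finset.subset_univ (S + C))
  have h4 : kap (-S) + (Finset.univ \ (S + C)).card ≤ ((-S) + (Finset.univ \ (S + C))).card :=
    kap_le hS.neg hfrag'
  have h5 := kap_neg hS hSu
  refine ⟨⟨hfrag', ?_⟩, by omega⟩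
  omega

lemma tight_translate {S C : Finset G} (g : G) (h : Tight S C) : Tight S (C + {g}) := by
  obtain ⟨⟨hCne, hCu⟩, htight⟩ := h
  have hassoc : S + (C + {g}) = (S + C) + {g} := (add_assoc S C {g}).symm
  have hcard1 : (C + {g}).card = C.card := by
    rw [Finset.add_singleton]
    exact Finset.card_image_of_injective _ (add_left_injective g)
  have hcard2 : (S + (C + {g})).card = (S + C).card := by
    rw [hassoc, Finset.add_singleton]
    exact Finset.card_image_of_injective _ (add_left_injective g)
  refine ⟨⟨hCne.add (Finset.singleton_nonempty g), ?_⟩, by omega⟩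
  intro he
  apply hCu
  apply Finset.eq_univ_of_card
  rw [← hcard2, he, Finset.card_univ]

lemma atom_translate {S A : Finset G} (g : G) (h : Tight S A ∧ A.card = atomCard S) :
    Tight S (A + {g}) ∧ (A + {g}).card = atomCard S := by
  refine ⟨tight_translate g h.1, ?_⟩
  have hc : (A + {g}).card = A.card := by
    rw [Finset.add_singleton]
    exact Finset.card_image_of_injective _ (add_left_injective g)
  rw [hc, h.2]

/-- Distinct atoms are disjoint (when the atom of `S` is no bigger than that of `-S`). -/
lemma atom_inter {S A A' : Finset G} (hS : S.Nonempty) (hSu : S ≠ Finset.univ)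
    (haa : atomCard S ≤ atomCard (-S))
    (hA : Tight S A) (hAc : A.card = atomCard S)
    (hA' : Tight S A') (hA'c : A'.card = atomCard S)
    (hmeet : (A ∩ A').Nonempty) : A = A' := by
  have hUnion : S + (A ∪ A') = (S + A) ∪ (S + A') := Finset.add_union ..
  have hInterSub : S + (A ∩ A') ⊆ (S + A) ∩ (S + A') := Finset.add_inter_subset ..
  have hfragInter : IsFrag S (A ∩ A') := by
    refine ⟨hmeet, fun he => hA.1.2 ?_⟩
    apply Finset.eq_univ_of_card
    have hsub : S + (A ∩ A') ⊆ S + A :=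
      Finset.add_subset_add_left Finset.inter_subset_left
    have := Finset.card_le_card hsub
    rw [he, Finset.card_univ] at this
    have h2 : (S + A).card ≤ Fintype.card G := by
      simpa [Finset.card_univ] using Finset.card_le_card (Finset.subset_univ (S + A))
    omega
  have hki : kap S + (A ∩ A').card ≤ (S + (A ∩ A')).card := kap_le hS hfragInter
  have hi2 : (S + (A ∩ A')).card ≤ ((S + A) ∩ (S + A')).card := Finset.card_le_card hInterSub
  have hcardsum : ((S + A) ∪ (S + A')).card + ((S + A) ∩ (S + A')).card
      = (S + A).card + (S + A').card := Finset.card_union_add_card_inter ..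
  have hAcard : (S + A).card = kap S + atomCard S := by rw [hA.2, hAc]
  have hA'card : (S + A').card = kap S + atomCard S := by rw [hA'.2, hA'c]
  have hAAcard : (A ∪ A').card + (A ∩ A').card = A.card + A'.card :=
    Finset.card_union_add_card_inter ..
  have hmeet1 : 1 ≤ (A ∩ A').card := Finset.card_pos.2 hmeet
  by_cases hu : S + (A ∪ A') = Finset.univ
  · -- impossible case
    exfalso
    obtain ⟨hdt, hdc⟩ := dual_tight hS hSu hA
    have hdsize : atomCard (-S) ≤ (Finset.univ \ (S + A)).card := atomCard_le hdt
    have hGA : kap S + atomCard S ≤ Fintype.card G := by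
      rw [← hAcard]
      simpa [Finset.card_univ] using Finset.card_le_card (Finset.subset_univ (S + A))
    -- card of G
    have hG : Fintype.card G = ((S + A) ∪ (S + A')).card := by
      rw [← hUnion, hu, Finset.card_univ]
    omega
  · have hfragUnion : IsFrag S (A ∪ A') :=
      ⟨Finset.Nonempty.inl hA.1.1, hu⟩
    have hku : kap S + (A ∪ A').card ≤ (S + (A ∪ A')).card := kap_le hS hfragUnion
    rw [hUnion] at hku
    -- conclude the intersection is tight
    have htightInter : Tight S (A ∩ A') := by
      refine ⟨hfragInter, ?_⟩
      omega
    have hister : atomCard S ≤ (A ∩ A').card := atomCard_le htightInter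
    have h1 : A ∩ A' = A := Finset.eq_of_subset_of_card_le Finset.inter_subset_left (by omega)
    have h2 : A ∩ A' = A' := Finset.eq_of_subset_of_card_le Finset.inter_subset_right (by omega)
    rw [← h1, h2]

/-- An atom containing `0` is closed under the group operations. -/
lemma exists_subgroup_aux {S : Finset G} (hS : S.Nonempty) (hSu : S ≠ Finset.univ)
    (haa : atomCard S ≤ atomCard (-S)) :
    ∃ A : Finset G, Tight S A ∧ (0 : G) ∈ A ∧
      (∀ x ∈ A, ∀ y ∈ A, x + y ∈ A) ∧ (∀ x ∈ A, -x ∈ A) := by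
  obtain ⟨A₁, hA₁, hA₁c⟩ := exists_atom hS hSu
  obtain ⟨a₁, ha₁⟩ := hA₁.1.1
  set A : Finset G := A₁ + {-a₁} with hAdef
  obtain ⟨hAt, hAc⟩ := atom_translate (-a₁) ⟨hA₁, hA₁c⟩
  have h0 : (0 : G) ∈ A := by
    have := Finset.add_mem_add ha₁ (Finset.mem_singleton_self (-a₁))
    simpa using this
  have key : ∀ x ∈ A, A + {x} = A := by
    intro x hx
    obtain ⟨hAxt, hAxc⟩ := atom_translate x ⟨hAt, hAc⟩
    refine atom_inter hS hSu haa hAxt hAxc hAt hAc ⟨x, ?_⟩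
    refine Finset.mem_inter.2 ⟨?_, hx⟩
    have := Finset.add_mem_add h0 (Finset.mem_singleton_self x)
    simpa using this
  refine ⟨A, hAt, h0, ?_, ?_⟩
  · intro x hx y hy
    have : x + y ∈ A + {y} := by
      have := Finset.add_mem_add hx (Finset.mem_singleton_self y)
      simpa using this
    rwa [key y hy] at this
  · intro x hx
    have h0' : (0 : G) ∈ A + {x} := by rw [key x hx]; exact h0
    rw [Finset.add_singleton] at h0'
    obtain ⟨y, hy, hyx⟩ := Finset.mem_image.1 h0'
    have hyx' : y + x = 0 := hyx
    have : y = -x := by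
      have := congrArg (· + (-x)) hyx'
      simpa [add_assoc] using this
    rwa [← this]

/-- Main structural result: the isoperimetric minimum is attained at a subgroup. -/
lemma exists_good_subgroup (S : Finset G) (hS : S.Nonempty) (hSu : S ≠ Finset.univ) :
    ∃ (H : AddSubgroup G) (Hf : Finset G), (Hf : Set G) = (H : Set G) ∧
      S + Hf ≠ Finset.univ ∧ (S + Hf).card = kap S + Hf.card := by
  rcases le_total (atomCard S) (atomCard (-S)) with haa | haa
  · obtain ⟨A, hAt, h0, hadd, hneg⟩ := exists_subgroup_aux hS hSu haa
    refine ⟨{ carrier := (A : Set G),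
              add_mem' := fun hx hy => hadd _ hx _ hy,
              zero_mem' := h0,
              neg_mem' := fun hx => hneg _ hx }, A, rfl, hAt.1.2, hAt.2⟩
  · have haa' : atomCard (-S) ≤ atomCard (- -S) := by rwa [neg_neg]
    obtain ⟨A, hAt, h0, hadd, hneg⟩ := exists_subgroup_aux hS.neg (neg_ne_univ hSu) haa'
    have hnegA : -A = A := by
      ext x
      simp only [Finset.mem_neg]
      constructor
      · rintro ⟨y, hy, rfl⟩; exact hneg _ hy
      · intro hx; exact ⟨-x, hneg _ hx, by simp⟩
    have hSA : S + A = -(-S + A) := by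
      rw [neg_add_finset, neg_neg, hnegA]
    have hcardeq : (S + A).card = (-S + A).card := by
      rw [hSA, card_neg_finset]
    refine ⟨{ carrier := (A : Set G),
              add_mem' := fun hx hy => hadd _ hx _ hy,
              zero_mem' := h0,
              neg_mem' := fun hx => hneg _ hx }, A, rfl, ?_, ?_⟩
    · intro he
      apply hAt.1.2
      apply Finset.eq_univ_of_card
      rw [← hcardeq, he, Finset.card_univ]
    · rw [hcardeq, hAt.2, kap_neg hS hSu]

end CayleyConn

lemma reach_closed {V : Type*} {Γ : SimpleGraph V} (P : V → Prop)
    (h : ∀ u v, Γ.Adj u v → P u → P v) {x y : V} (hr : Γ.Reachable x y) (hx : P x) : P y := by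
  obtain ⟨w⟩ := hr
  induction w with
  | nil => exact hx
  | cons ha _ ih => exact ih (h _ _ ha hx)


open CayleyConn

/-- Corollary: if `S ∩ 2∗G ≠ ∅` (in particular whenever `G` has odd order and `S ≠ ∅`),
then `κ(Cay⁺(S)) = min{|S+H| − |H| : H ≤ G, S + H ≠ G}`. -/
theorem corollary_2astS {G : Type*} [AddCommGroup G] [Fintype G]
    (S : Set G) (hS : S ≠ Set.univ)
    (h2 : (S ∩ {x : G | ∃ g : G, x = g + g}).Nonempty) :
    vertexConnectivity (addCayley S)
      = sInf {n : ℕ | ∃ H : AddSubgroup G, S + (H : Set G) ≠ Set.univ ∧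
          n = (S + (H : Set G)).ncard - (H : Set G).ncard} := by
  unfold vertexConnectivity
  classical
  obtain ⟨σ, hσS, g, hσg⟩ := h2
  subst hσg
  -- Finset versions
  set Sf : Finset G := (Set.toFinite S).toFinset with hSfdef
  have hSfc : (Sf : Set G) = S := (Set.toFinite S).coe_toFinset
  have hσSf : g + g ∈ Sf := (Set.Finite.mem_toFinset _).2 hσS
  have hSne : Sf.Nonempty := ⟨_, hσSf⟩
  have hSu : Sf ≠ Finset.univ := by
    intro h; apply hS; rw [← hSfc, h, Finset.coe_univ]
  obtain ⟨H, Hf, hHfc, hHu, hHcard⟩ := CayleyConn.exists_good_subgroup Sf hSne hSu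
  have hSH : S + (H : Set G) = ((Sf + Hf : Finset G) : Set G) := by
    rw [Finset.coe_add, hSfc, hHfc]
  have hne' : S + (H : Set G) ≠ Set.univ := by
    rw [hSH]; intro h
    exact hHu (by rwa [← Finset.coe_univ, Finset.coe_inj] at h)
  have hn₀ : (S + (H : Set G)).ncard - (H : Set G).ncard = kap Sf := by
    rw [hSH, Set.ncard_coe_finset, ← hHfc, Set.ncard_coe_finset, hHcard]
    omega
  apply le_antisymm
  · -- upper bound: construct explicit cut sets
    refine le_csInf ⟨_, H, hne', rfl⟩ ?_
    rintro n ⟨H', hH'u, rfl⟩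
    set P : Set G := S + (H' : Set G) with hPdef
    set T : Set G := (· + (-g)) '' P with hTdef
    set A₀ : Set G := (· + g) '' (H' : Set G) with hA₀def
    set s : Set G := T \ A₀ with hsdef
    have hA₀T : A₀ ⊆ T := by
      rintro x ⟨h, hh, rfl⟩
      exact ⟨(g + g) + h, Set.add_mem_add hσS hh, by dsimp only; abel⟩
    have hTcard : T.ncard = P.ncard := Set.ncard_image_of_injective _ (add_left_injective (-g))
    have hA₀card : A₀.ncard = (H' : Set G).ncard :=
      Set.ncard_image_of_injective _ (add_left_injective g)
    have hscard : s.ncard = P.ncard - (H' : Set G).ncard := by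
      rw [hsdef, Set.ncard_diff hA₀T, hTcard, hA₀card]
    have hgA₀ : g ∈ A₀ := ⟨0, H'.zero_mem, by simp⟩
    have hgsc : g ∈ sᶜ := fun hg => hg.2 hgA₀
    have hTne : T ≠ Set.univ := by
      intro h
      apply hH'u
      apply Set.eq_univ_of_forall
      intro p
      have hmem : p + (-g) ∈ T := h ▸ Set.mem_univ _
      obtain ⟨q, hq, hqe⟩ := hmem
      have hqp : q = p := by
        have := congrArg (· + g) hqe
        simpa [add_assoc] using this
      rwa [← hqp]
    obtain ⟨b, hb⟩ : ∃ b, b ∉ T := by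
      by_contra h; push_neg at h; exact hTne (Set.eq_univ_of_forall h)
    have hbsc : b ∈ sᶜ := fun hbs => hb hbs.1
    have hadj : ∀ u v : G, u ∈ A₀ → (addCayley S).Adj u v → v ∈ T := by
      rintro u v ⟨h, hh, rfl⟩ ⟨hne'', hmem⟩
      refine ⟨v + g, ?_, by dsimp only; abel⟩
      have hmv : ((h + g) + v) + (-h) ∈ S + (H' : Set G) := Set.add_mem_add hmem (H'.neg_mem hh)
      have he : v + g = ((h + g) + v) + (-h) := by abel
      rwa [he]
    have hstep : ∀ u v : ↥(sᶜ), ((addCayley S).induce sᶜ).Adj u v →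
        (u : G) ∈ A₀ → (v : G) ∈ A₀ := by
      intro u v huv hu
      have hvT : (v : G) ∈ T := hadj _ _ hu huv
      by_contra hvA
      exact v.2 ⟨hvT, hvA⟩
    have hnc : ¬ ((addCayley S).induce (sᶜ : Set G)).Connected := by
      intro hcon
      have hreach := hcon.preconnected ⟨g, hgsc⟩ ⟨b, hbsc⟩
      have : (b : G) ∈ A₀ :=
        reach_closed (Γ := (addCayley S).induce (sᶜ : Set G))
          (fun z => (z : G) ∈ A₀) hstep hreach hgA₀
      exact hb (hA₀T this)
    exact Nat.sInf_le ⟨s, hscard, Or.inr hnc⟩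
  · -- lower bound
    refine le_csInf ⟨Fintype.card G, Set.univ, by simp [Set.ncard_univ], Or.inl (by simp)⟩ ?_
    rintro k ⟨s, hscard, hdis⟩
    have hRk : sInf {n : ℕ | ∃ H : AddSubgroup G, S + (H : Set G) ≠ Set.univ ∧
        n = (S + (H : Set G)).ncard - (H : Set G).ncard} ≤ kap Sf :=
      Nat.sInf_le ⟨H, hne', hn₀.symm⟩
    refine le_trans hRk ?_
    have hsplit : s.ncard + sᶜ.ncard = Fintype.card G := by
      rw [Set.ncard_add_ncard_compl, Nat.card_eq_fintype_card]
    have hSfle : Sf.card ≤ Fintype.card G := by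
      simpa [Finset.card_univ] using Finset.card_le_card (Finset.subset_univ Sf)
    have hSfne : Sf.card ≠ Fintype.card G := fun h => hSu (Finset.eq_univ_of_card _ h)
    have hSfcard : Sf.card < Fintype.card G := lt_of_le_of_ne hSfle hSfne
    by_cases hc : (sᶜ : Set G).ncard ≤ 1
    · have hk0 : kap Sf ≤ (Sf + {0}).card - ({0} : Finset G).card :=
        Nat.sInf_le ⟨{0}, frag_zero hSu, rfl⟩
      have h00 : Sf + ({0} : Finset G) = Sf := by
        simp [Finset.add_singleton]
      rw [h00, Finset.card_singleton] at hk0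
      omega
    · have hc2 : 2 ≤ (sᶜ : Set G).ncard := by omega
      have hnc : ¬ ((addCayley S).induce (sᶜ : Set G)).Connected := by
        rcases hdis with h | h
        · omega
        · exact h
      have hscne : (sᶜ : Set G).Nonempty := by
        rcases Set.eq_empty_or_nonempty (sᶜ : Set G) with h | h
        · rw [h] at hc2; simp at hc2
        · exact h
      have : Nonempty ↥(sᶜ : Set G) := hscne.to_subtype
      have hpre : ¬ ((addCayley S).induce (sᶜ : Set G)).Preconnected := fun hp =>
        hnc ((SimpleGraph.connected_iff _).2 ⟨hp, this⟩)
      simp only [SimpleGraph.Preconnected] at hpre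
      push_neg at hpre
      obtain ⟨⟨x, hxs⟩, ⟨y, hys⟩, hxy⟩ := hpre
      set A : Set G := {z | ∃ hz : z ∈ sᶜ,
        ((addCayley S).induce (sᶜ : Set G)).Reachable ⟨x, hxs⟩ ⟨z, hz⟩} with hAdef
      have hxA : x ∈ A := ⟨hxs, SimpleGraph.Reachable.refl _⟩
      have hyA : y ∉ A := fun ⟨hy', hr⟩ => hxy hr
      have hAB : ∀ a ∈ A, ∀ b, b ∈ sᶜ → b ∉ A → a + b ∉ S := by
        rintro a ⟨has, hra⟩ b hbs hbA hab
        have hne'' : a ≠ b := fun h => hbA (h ▸ ⟨has, hra⟩)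
        have hadj' : ((addCayley S).induce (sᶜ : Set G)).Adj ⟨a, has⟩ ⟨b, hbs⟩ :=
          ⟨hne'', hab⟩
        exact hbA ⟨hbs, hra.trans hadj'.reachable⟩
      set Af : Finset G := (Set.toFinite A).toFinset with hAfdef
      set sf : Finset G := (Set.toFinite s).toFinset with hsfdef
      have hAfne : Af.Nonempty := ⟨x, (Set.Finite.mem_toFinset _).2 hxA⟩
      have hsub : Sf + (-Af) ⊆ Af ∪ sf := by
        intro z hz
        obtain ⟨σ', hσ', w, hw, rfl⟩ := Finset.mem_add.1 hz
        obtain ⟨a, ha, rfl⟩ := Finset.mem_neg.1 hw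
        have haA : a ∈ A := (Set.Finite.mem_toFinset _).1 ha
        have hσ'S : σ' ∈ S := (Set.Finite.mem_toFinset _).1 hσ'
        by_cases hzs : σ' + (-a) ∈ s
        · exact Finset.mem_union_right _ ((Set.Finite.mem_toFinset _).2 hzs)
        · by_cases hzA : σ' + (-a) ∈ A
          · exact Finset.mem_union_left _ ((Set.Finite.mem_toFinset _).2 hzA)
          · exfalso
            apply hAB a haA _ hzs hzA
            have he : a + (σ' + -a) = σ' := by abel
            rwa [he]
      have hfrag : IsFrag Sf (-Af) := by
        refine ⟨hAfne.neg, fun he => ?_⟩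
        have hy1 : y ∈ Af ∪ sf := hsub (he ▸ Finset.mem_univ y)
        rcases Finset.mem_union.1 hy1 with h | h
        · exact hyA ((Set.Finite.mem_toFinset _).1 h)
        · exact hys ((Set.Finite.mem_toFinset _).1 h)
      have hkle := kap_le hSne hfrag
      have hle2a := Finset.card_le_card hsub
      have hle2b : (Af ∪ sf).card ≤ Af.card + sf.card := Finset.card_union_le Af sf
      have hnegc : (-Af).card = Af.card := card_neg_finset Af
      have hsfc : sf.card = k := by
        have h' := Set.ncard_eq_toFinset_card s (Set.toFinite s)
        rw [hsfdef, ← h', hscard]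
      omega
end

section
/- Let G be a finite abelian group and S ⊂ G a proper subset such that Cay⁺(S) is connected. Then κ(Cay⁺(S)) ≥ |S|/2. -/
open Pointwise

section Kneser

variable {G : Type*} [AddCommGroup G] [Fintype G] [DecidableEq G]

/-- aux subgroup of periods -/
def periodSubgroup (A : Finset G) : AddSubgroup G where
  carrier := {g | ∀ x ∈ A, x + g ∈ A}
  zero_mem' := by intro x hx; simpa using hx
  add_mem' := by
    intro g h hg hh x hx
    have := hh (x + g) (hg x hx)
    simpa [add_assoc] using this
  neg_mem' := by
    intro g hg x hx
    have himg : A.image (· + g) = A := by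
      apply Finset.eq_of_subset_of_card_le
      · intro y hy
        obtain ⟨z, hz, rfl⟩ := Finset.mem_image.1 hy
        exact hg z hz
      · rw [Finset.card_image_of_injective _ (add_left_injective g)]
    have : x ∈ A.image (· + g) := by rw [himg]; exact hx
    obtain ⟨z, hz, hzx⟩ := Finset.mem_image.1 this
    have : x + -g = z := by rw [← hzx]; abel
    rwa [this]

lemma kneser_light :
    ∀ (n : ℕ) (A B : Finset G), B.card ≤ n → A.Nonempty → B.Nonempty →
    ∃ (K : AddSubgroup G) (A' : Finset G) (b : G),
      b ∈ B ∧ A ⊆ A' ∧ (∀ k ∈ K, ∀ x ∈ A', x + k ∈ A') ∧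
      (∀ x ∈ A', x + b ∈ A + B) ∧
      A.card + B.card ≤ A'.card + ((K : Set G).toFinite.toFinset).card := by
  intro n
  induction n with
  | zero =>
    intro A B hB0 _ hB
    obtain ⟨b, hb⟩ := hB
    simp [Nat.le_zero, Finset.card_eq_zero] at hB0
    simp [hB0] at hb
  | succ n ih =>
    intro A B hBn hA hB
    by_cases hstall : ∀ a ∈ A, ∀ b ∈ B, ∀ b' ∈ B, a + b' - b ∈ A
    · obtain ⟨b, hb⟩ := hB
      refine ⟨periodSubgroup A, A, b, hb, subset_rfl, ?_, ?_, ?_⟩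
      · intro k hk x hx; exact hk x hx
      · intro x hx; exact Finset.add_mem_add hx hb
      · have hinj : ∀ b' ∈ B, b' - b ∈ (periodSubgroup A : Set G).toFinite.toFinset := by
          intro b' hb'
          rw [Set.Finite.mem_toFinset]
          intro x hx
          have := hstall x hx b hb b' hb'
          rwa [add_sub_assoc] at this
        have : B.card ≤ ((periodSubgroup A : Set G).toFinite.toFinset).card := by
          apply Finset.card_le_card_of_injOn (fun b' => b' - b) hinj
          intro x _ y _ h
          exact sub_left_injective h
        omega
    · push_neg at hstall
      obtain ⟨a, ha, b, hb, b', hb', hnot⟩ := hstall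
      set e := a - b with he
      set A2 := A ∪ B.image (e + ·) with hA2
      set B2 := B.filter (fun y => e + y ∈ A) with hB2
      have hbB2 : b ∈ B2 := by
        rw [hB2, Finset.mem_filter]
        exact ⟨hb, by rwa [he, sub_add_cancel]⟩
      have hb'B2 : b' ∉ B2 := by
        rw [hB2, Finset.mem_filter]
        rintro ⟨-, hmem⟩
        apply hnot
        have : e + b' = a + b' - b := by rw [he]; abel
        rwa [this] at hmem
      have hB2lt : B2.card < B.card := by
        apply Finset.card_lt_card
        exact ⟨Finset.filter_subset _ _, fun h => hb'B2 (h hb')⟩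
      have hcards : A2.card + B2.card = A.card + B.card := by
        have h1 : A2 = A ∪ ((B.filter (fun y => ¬ (e + y ∈ A))).image (e + ·)) := by
          rw [hA2]
          apply Finset.Subset.antisymm
          · intro x hx
            rcases Finset.mem_union.1 hx with h | h
            · exact Finset.mem_union_left _ h
            · obtain ⟨y, hy, rfl⟩ := Finset.mem_image.1 h
              by_cases hyA : e + y ∈ A
              · exact Finset.mem_union_left _ hyA
              · exact Finset.mem_union_right _ (Finset.mem_image_of_mem _
                  (Finset.mem_filter.2 ⟨hy, hyA⟩))
          · apply Finset.union_subset_union subset_rfl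
            apply Finset.image_subset_image (Finset.filter_subset _ _)
        have hdisj : Disjoint A ((B.filter (fun y => ¬ (e + y ∈ A))).image (e + ·)) := by
          rw [Finset.disjoint_right]
          intro x hx
          obtain ⟨y, hy, rfl⟩ := Finset.mem_image.1 hx
          exact (Finset.mem_filter.1 hy).2
        rw [h1, Finset.card_union_of_disjoint hdisj,
          Finset.card_image_of_injective _ (add_right_injective e)]
        have := Finset.card_filter_add_card_filter_not (s := B)
          (p := fun y => e + y ∈ A)
        have hB2c : B2.card = (Finset.filter (fun y => e + y ∈ A) B).card := by rw [hB2]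
        omega
      have hsub : ∀ x ∈ A2, ∀ y ∈ B2, x + y ∈ A + B := by
        intro x hx y hy
        have hyB : y ∈ B := Finset.filter_subset _ _ hy
        have hyA : e + y ∈ A := (Finset.mem_filter.1 hy).2
        rcases Finset.mem_union.1 hx with h | h
        · exact Finset.add_mem_add h hyB
        · obtain ⟨z, hz, rfl⟩ := Finset.mem_image.1 h
          have : (e + z) + y = (e + y) + z := by abel
          rw [this]
          exact Finset.add_mem_add hyA hz
      obtain ⟨K, A', b'', hb''B2, hA2A', hper, hsum, hcard⟩ :=
        ih A2 B2 (Nat.lt_succ_iff.mp (lt_of_lt_of_le hB2lt hBn)) (hA.mono Finset.subset_union_left) ⟨b, hbB2⟩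
      refine ⟨K, A', b'', Finset.filter_subset _ _ hb''B2,
        Finset.subset_union_left.trans hA2A', hper, ?_, by omega⟩
      intro x hx
      have := hsum x hx
      obtain ⟨p, hp, q, hq, hpq⟩ := Finset.mem_add.1 this
      exact hpq ▸ hsub p hp q hq

end Kneser

lemma cut_bound {G : Type*} [AddCommGroup G] [Fintype G]
    (S : Set G) (hS : S ≠ Set.univ) (hconn : (addCayley S).Connected) (Ts : Set G)
    (hor : (Tsᶜ : Set G).ncard ≤ 1 ∨ ¬ ((addCayley S).induce (Tsᶜ : Set G)).Connected) :
    S.ncard ≤ 2 * Ts.ncard := by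
  classical
  set N := Fintype.card G with hN
  have hSlt : S.ncard < N := by
    have h := Set.ncard_lt_ncard (Set.ssubset_univ_iff.2 hS) (Set.toFinite _)
    simpa [Set.ncard_univ, Nat.card_eq_fintype_card] using h
  have hcompl : Ts.ncard + (Tsᶜ : Set G).ncard = N := by
    have := Set.ncard_add_ncard_compl Ts
    simpa [Nat.card_eq_fintype_card] using this
  rcases hor with h1 | h2
  · omega
  · by_contra hbig
    push_neg at hbig
    have hne : (Tsᶜ : Set G).Nonempty := by
      rcases Set.eq_empty_or_nonempty (Tsᶜ : Set G) with h | h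
      · rw [h] at hcompl
        simp at hcompl
        omega
      · exact h
    have hnonempty : Nonempty ↥(Tsᶜ : Set G) := hne.to_subtype
    have hnp : ¬ ((addCayley S).induce (Tsᶜ : Set G)).Preconnected := by
      intro hp
      exact h2 ⟨hp⟩
    simp only [SimpleGraph.Preconnected] at hnp
    push_neg at hnp
    obtain ⟨u, v, hncr⟩ := hnp
    set A : Set G := {x | ∃ hx : x ∈ (Tsᶜ : Set G),
      ((addCayley S).induce (Tsᶜ : Set G)).Reachable u ⟨x, hx⟩} with hAdef
    set B : Set G := (Tsᶜ : Set G) \ A with hBdef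
    have huA : (u : G) ∈ A := ⟨u.2, by rw [Subtype.coe_eta]⟩
    have hvB : (v : G) ∈ B := by
      refine ⟨v.2, fun hvA => ?_⟩
      obtain ⟨hx, hr⟩ := hvA
      rw [Subtype.coe_eta] at hr
      exact hncr hr
    have hedge : ∀ a ∈ A, ∀ c ∈ B, a + c ∉ S := by
      rintro a ⟨haT, har⟩ c hc hS'
      have hac : a ≠ c := by
        rintro rfl
        exact hc.2 ⟨haT, har⟩
      have hadj : ((addCayley S).induce (Tsᶜ : Set G)).Adj ⟨a, haT⟩ ⟨c, hc.1⟩ :=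
        ⟨hac, hS'⟩
      exact hc.2 ⟨hc.1, har.trans hadj.reachable⟩
    -- Finsets
    have hAB : A ∪ B = (Tsᶜ : Set G) := by
      apply Set.Subset.antisymm
      · rintro x (hx | hx)
        · exact hx.1
        · exact hx.1
      · intro x hx
        by_cases hxA : x ∈ A
        · exact Or.inl hxA
        · exact Or.inr ⟨hx, hxA⟩
    obtain ⟨K, A', b, hbB, hAA', hper, hsum, hcard⟩ :=
      kneser_light (B.toFinset.card) A.toFinset B.toFinset le_rfl
        ⟨u, Set.mem_toFinset.2 huA⟩ ⟨v, Set.mem_toFinset.2 hvB⟩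
    set C := A'.image (· + b) with hCdef
    set W := (Finset.univ : Finset G) \ C with hWdef
    set KF := ((K : Set G).toFinite.toFinset) with hKFdef
    have hCA' : C.card = A'.card := Finset.card_image_of_injective _ (add_left_injective b)
    have hSC : ∀ s ∈ S, s ∉ C := by
      intro s hs hsC
      obtain ⟨x, hx, hxs⟩ := Finset.mem_image.1 hsC
      have hmem := hsum x hx
      rw [hxs] at hmem
      obtain ⟨p, hp, q, hq, hpq⟩ := Finset.mem_add.1 hmem
      exact hedge p (Set.mem_toFinset.1 hp) q (Set.mem_toFinset.1 hq) (hpq ▸ hs)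
    have hSW : S.toFinset ⊆ W := by
      intro s hs
      exact Finset.mem_sdiff.2 ⟨Finset.mem_univ _, hSC s (Set.mem_toFinset.1 hs)⟩
    have hWper : ∀ x ∈ W, ∀ k, k ∈ K → x + k ∈ W := by
      intro x hx k hk
      refine Finset.mem_sdiff.2 ⟨Finset.mem_univ _, fun hmem => ?_⟩
      obtain ⟨y, hy, hxy⟩ := Finset.mem_image.1 hmem
      have hyk : y + -k ∈ A' := hper (-k) (neg_mem hk) y hy
      have : (y + -k) + b = x := by
        have : y + b = x + k := hxy
        rw [add_comm y (-k), add_assoc, this]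
        abel
      have hxC : x ∈ C := this ▸ Finset.mem_image_of_mem _ hyk
      exact (Finset.mem_sdiff.1 hx).2 hxC
    -- cardinalities
    have hdAB : Disjoint A B := Set.disjoint_sdiff_right
    have hABcard : A.ncard + B.ncard = (Tsᶜ : Set G).ncard := by
      rw [← hAB, Set.ncard_union_eq hdAB (Set.toFinite _) (Set.toFinite _)]
    have hAcard : A.ncard = A.toFinset.card := Set.ncard_eq_toFinset_card' A
    have hBcard : B.ncard = B.toFinset.card := Set.ncard_eq_toFinset_card' B
    have hScard : S.ncard = S.toFinset.card := Set.ncard_eq_toFinset_card' S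
    have hWcard : W.card + C.card = N := by
      have h1 := Finset.card_sdiff_of_subset (Finset.subset_univ C)
      have h2 := Finset.card_le_univ C
      have h3 : (Finset.univ : Finset G).card = Fintype.card G := Finset.card_univ
      rw [hWdef]
      omega
    have hSWcard : S.toFinset.card ≤ W.card := Finset.card_le_card hSW
    have hKbig : Ts.ncard + 1 ≤ KF.card := by omega
    have hWsmall : W.card + 1 ≤ 2 * KF.card := by omega
    -- s₀
    have hSne : S.Nonempty := Set.nonempty_of_ncard_ne_zero (by omega)
    obtain ⟨s₀, hs₀⟩ := hSne
    have hs₀W : s₀ ∈ W := hSW (Set.mem_toFinset.2 hs₀)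
    have hcoset : ∀ x ∈ W, x - s₀ ∈ K := by
      intro x hx
      by_contra hxK
      set X1 := KF.image (s₀ + ·) with hX1
      set X2 := KF.image (x + ·) with hX2
      have hX1W : X1 ⊆ W := by
        intro y hy
        obtain ⟨k, hk, rfl⟩ := Finset.mem_image.1 hy
        exact hWper s₀ hs₀W k (by rwa [Set.Finite.mem_toFinset] at hk)
      have hX2W : X2 ⊆ W := by
        intro y hy
        obtain ⟨k, hk, rfl⟩ := Finset.mem_image.1 hy
        exact hWper x hx k (by rwa [Set.Finite.mem_toFinset] at hk)
      have hdisj : Disjoint X1 X2 := by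
        rw [Finset.disjoint_left]
        intro y hy1 hy2
        obtain ⟨k1, hk1, hk1y⟩ := Finset.mem_image.1 hy1
        obtain ⟨k2, hk2, hk2y⟩ := Finset.mem_image.1 hy2
        rw [Set.Finite.mem_toFinset] at hk1 hk2
        apply hxK
        have : x - s₀ = k1 - k2 := by
          have : s₀ + k1 = x + k2 := by rw [hk1y, hk2y]
          have h' : x = s₀ + k1 - k2 := by rw [this]; abel
          rw [h']; abel
        rw [this]
        exact sub_mem hk1 hk2
      have hcard2 : (X1 ∪ X2).card = 2 * KF.card := by
        rw [Finset.card_union_of_disjoint hdisj, hX1, hX2,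
          Finset.card_image_of_injective _ (add_right_injective s₀),
          Finset.card_image_of_injective _ (add_right_injective x)]
        ring
      have : (X1 ∪ X2).card ≤ W.card :=
        Finset.card_le_card (Finset.union_subset hX1W hX2W)
      omega
    have hSK : ∀ s ∈ S, s - s₀ ∈ K := fun s hs =>
      hcoset s (hSW (Set.mem_toFinset.2 hs))
    -- walk lemma
    have hwalk : ∀ g : G, g ∈ K ∨ g - s₀ ∈ K := by
      intro g
      obtain ⟨w⟩ := hconn.preconnected g s₀
      have key : ∀ {x y : G} (_ : (addCayley S).Walk x y), x - y ∈ K ∨ x + y - s₀ ∈ K := by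
        intro x y p
        induction p with
        | nil => exact Or.inl (by simpa using zero_mem K)
        | @cons x' y' z' h p ih =>
          have hS' : x' + y' - s₀ ∈ K := hSK _ h.2
          rcases ih with h1 | h1
          · right
            have heq : x' + z' - s₀ = (x' + y' - s₀) - (y' - z') := by abel
            rw [heq]
            exact sub_mem hS' h1
          · left
            have heq : x' - z' = (x' + y' - s₀) - (y' + z' - s₀) := by abel
            rw [heq]
            exact sub_mem hS' h1
      rcases key w with h1 | h1
      · right; exact h1
      · left; rwa [add_sub_cancel_right] at h1
    have hs₀K : s₀ ∉ K := by
      intro hs₀K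
      have huA' : (u : G) ∈ A' := hAA' (Set.mem_toFinset.2 huA)
      have hub : (u : G) + b ∈ C := Finset.mem_image_of_mem _ huA'
      have hWub : (u : G) + b ∈ W := by
        have hx : ((u : G) + b) - s₀ ∈ K := by
          rcases hwalk ((u : G) + b) with h | h
          · exact sub_mem h hs₀K
          · exact h
        have h' := hWper s₀ hs₀W _ hx
        rwa [show s₀ + ((u : G) + b - s₀) = (u : G) + b from by abel] at h'
      exact (Finset.mem_sdiff.1 hWub).2 hub
    have hA'K : ∀ x ∈ A', x + b ∈ K := by
      intro x hx
      rcases hwalk (x + b) with h | h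
      · exact h
      · exfalso
        have h' := hWper s₀ hs₀W _ h
        rw [show s₀ + (x + b - s₀) = x + b from by abel] at h'
        exact (Finset.mem_sdiff.1 h').2 (Finset.mem_image_of_mem _ hx)
    -- endgame
    have hfinal : ∀ s ∈ S, s - (u : G) ∈ Ts := by
      intro s hs
      set x := s - (u : G) with hxdef
      have hxu : x + (u : G) = s := sub_add_cancel s u
      have hxA : x ∉ A := by
        intro hxA
        have h1 : x + b ∈ K := hA'K x (hAA' (Set.mem_toFinset.2 hxA))
        have h2 : (u : G) + b ∈ K := hA'K _ (hAA' (Set.mem_toFinset.2 huA))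
        have h3 : s - s₀ ∈ K := hSK s hs
        rcases hwalk b with hb1 | hb1
        · apply hs₀K
          have hxK : x ∈ K := by
            have := sub_mem h1 hb1
            rwa [add_sub_cancel_right] at this
          have huK : (u : G) ∈ K := by
            have := sub_mem h2 hb1
            rwa [add_sub_cancel_right] at this
          have hsK : s ∈ K := by
            rw [← hxu]; exact add_mem hxK huK
          have := sub_mem hsK h3
          rwa [sub_sub_cancel] at this
        · apply hs₀K
          have h4 : x + s₀ ∈ K := by
            have := sub_mem h1 hb1
            rwa [show x + b - (b - s₀) = x + s₀ by abel] at this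
          have h5 : (u : G) + s₀ ∈ K := by
            have := sub_mem h2 hb1
            rwa [show (u : G) + b - (b - s₀) = (u : G) + s₀ by abel] at this
          have h6 : s₀ + s₀ ∈ K := by
            rcases hwalk (s₀ + s₀) with h | h
            · exact h
            · rw [add_sub_cancel_right] at h
              exact absurd h hs₀K
          have heq : s₀ = ((x + s₀) + ((u : G) + s₀)) - (s - s₀) - (s₀ + s₀) := by
            rw [← hxu]; abel
          rw [heq]
          exact sub_mem (sub_mem (add_mem h4 h5) h3) h6
      have hxB : x ∉ B := by
        intro hxB
        apply hedge _ huA _ hxB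
        rw [add_comm, hxu]
        exact hs
      by_contra hxT
      have hxTc : x ∈ (Tsᶜ : Set G) := hxT
      rw [← hAB] at hxTc
      rcases hxTc with h | h
      · exact hxA h
      · exact hxB h
    have himg : S.toFinset.image (· - (u : G)) ⊆ Ts.toFinset := by
      intro y hy
      obtain ⟨s, hs, rfl⟩ := Finset.mem_image.1 hy
      exact Set.mem_toFinset.2 (hfinal s (Set.mem_toFinset.1 hs))
    have hfin : S.toFinset.card ≤ Ts.toFinset.card := by
      have := Finset.card_le_card himg
      rwa [Finset.card_image_of_injective _ sub_left_injective] at this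
    have hTcard : Ts.ncard = Ts.toFinset.card := Set.ncard_eq_toFinset_card' Ts
    omega


/-- Corollary: if `Cay⁺(S)` is connected, then `κ(Cay⁺(S)) ≥ |S|/2`. -/
theorem corollary_Sover2 {G : Type*} [AddCommGroup G] [Fintype G]
    (S : Set G) (hS : S ≠ Set.univ)
    (hconn : (addCayley S).Connected) :
    S.ncard ≤ 2 * vertexConnectivity (addCayley S) := by
  classical
  have hne : {k | ∃ s : Set G, s.ncard = k ∧
      ((sᶜ : Set G).ncard ≤ 1 ∨ ¬ ((addCayley S).induce (sᶜ : Set G)).Connected)}.Nonempty := by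
    refine ⟨(Set.univ : Set G).ncard, Set.univ, rfl, Or.inl ?_⟩
    simp
  have hmem := Nat.sInf_mem hne
  obtain ⟨Ts, hTscard, hor⟩ := hmem
  have := cut_bound S hS hconn Ts hor
  rw [vertexConnectivity, ← hTscard]
  exact this
end

section
/- Let G be a finite non-trivial abelian group, S ⊂ G a proper subset with Cay⁺(S) connected, and let p denote the smallest order of a non-zero subgroup of G (i.e., the smallest prime divisor of |G|). Then κ(Cay⁺(S)) ≥ min{|S| − 1, p}. -/
open Pointwise

lemma kneser_weak {G : Type*} [AddCommGroup G] [Fintype G] [DecidableEq G] :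
    ∀ (m : ℕ) (A B : Finset G), B.card ≤ m → A.Nonempty → B.Nonempty →
    ∃ (L : AddSubgroup G) (A' : Finset G) (b : G), b ∈ B ∧ A ⊆ A' ∧
      (∀ x ∈ A', x + b ∈ A + B) ∧ (∀ x ∈ A', ∀ l ∈ L, x + l ∈ A') ∧
      A.card + B.card ≤ A'.card + Nat.card L := by
  classical
  intro m
  induction m with
  | zero =>
    intro A B hBm hA hB
    exact absurd (Finset.card_pos.2 hB) (by omega)
  | succ m ih =>
    intro A B hBm hA hB
    by_cases hcase : ∃ a ∈ A, ∃ b ∈ B, ∃ b' ∈ B, b' + a - b ∉ A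
    · obtain ⟨a, ha, b, hb, b', hb', hnot⟩ := hcase
      set e := a - b with he
      set A2 := A ∪ B.image (· + e) with hA2def
      set B2 := B.filter (fun y => y + e ∈ A) with hB2def
      have hbB2 : b ∈ B2 := by
        simp only [hB2def, Finset.mem_filter]
        refine ⟨hb, ?_⟩
        have : b + e = a := by rw [he]; abel
        rw [this]; exact ha
      have hb'B2 : b' ∉ B2 := by
        simp only [hB2def, Finset.mem_filter]
        rintro ⟨-, h⟩
        apply hnot
        have heq : b' + a - b = b' + e := by rw [he]; abel
        rwa [heq]
      have hB2B : B2 ⊆ B := Finset.filter_subset _ _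
      have hcardlt : B2.card < B.card :=
        Finset.card_lt_card ⟨hB2B, fun h => hb'B2 (h hb')⟩
      have hAA2 : A ⊆ A2 := Finset.subset_union_left
      have hsum2 : ∀ x ∈ A2, ∀ y ∈ B2, x + y ∈ A + B := by
        intro x hx y hy
        rw [hA2def, Finset.mem_union] at hx
        have hy' := hy
        rw [hB2def, Finset.mem_filter] at hy'
        rcases hx with hx | hx
        · exact Finset.add_mem_add hx (hB2B hy)
        · obtain ⟨c, hc, rfl⟩ := Finset.mem_image.1 hx
          have : c + e + y = (y + e) + c := by abel
          rw [this]
          exact Finset.add_mem_add hy'.2 hc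
      have hcards : A2.card + B2.card = A.card + B.card := by
        have h1 : (B.image (· + e)).card = B.card :=
          Finset.card_image_of_injective _ (add_left_injective e)
        have h2 : B2.image (· + e) = A ∩ B.image (· + e) := by
          ext z
          simp only [Finset.mem_image, hB2def, Finset.mem_filter, Finset.mem_inter]
          constructor
          · rintro ⟨y, ⟨hy, hyA⟩, rfl⟩
            exact ⟨hyA, y, hy, rfl⟩
          · rintro ⟨hzA, y, hy, rfl⟩
            exact ⟨y, ⟨hy, hzA⟩, rfl⟩
        have h3 : B2.card = (A ∩ B.image (· + e)).card := by
          rw [← h2, Finset.card_image_of_injective _ (add_left_injective e)]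
        have h4 := Finset.card_union_add_card_inter A (B.image (· + e))
        rw [hA2def]
        omega
      obtain ⟨L, A', bs, h1, h2, h3, h4, h5⟩ :=
        ih A2 B2 (by omega) (hA.mono hAA2) ⟨b, hbB2⟩
      refine ⟨L, A', bs, hB2B h1, hAA2.trans h2, ?_, h4, by omega⟩
      intro x hx
      have := h3 x hx
      obtain ⟨u, hu, v, hv, huv⟩ := Finset.mem_add.1 this
      rw [← huv]
      exact hsum2 u hu v hv
    · push_neg at hcase
      obtain ⟨b0, hb0⟩ := hB
      set L := AddSubgroup.closure {x : G | ∃ u ∈ B, ∃ v ∈ B, x = u - v} with hLdef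
      have hK : ∀ l ∈ L, ∀ x ∈ A, x + l ∈ A := by
        have hle : L ≤ {
          carrier := {l : G | ∀ x ∈ A, x + l ∈ A}
          zero_mem' := by simp
          add_mem' := by
            intro l1 l2 hl1 hl2 x hx
            rw [← add_assoc]
            exact hl2 _ (hl1 _ hx)
          neg_mem' := by
            intro l hl x hx
            have himg : A.image (· + l) = A := by
              apply Finset.eq_of_subset_of_card_le
              · intro z hz
                obtain ⟨y, hy, rfl⟩ := Finset.mem_image.1 hz
                exact hl y hy
              · rw [Finset.card_image_of_injective _ (add_left_injective l)]
            rw [← himg] at hx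
            obtain ⟨y, hy, hyx⟩ := Finset.mem_image.1 hx
            have : x + -l = y := by rw [← hyx]; abel
            rw [this]; exact hy } := by
          rw [hLdef]
          apply AddSubgroup.closure_le _ |>.2
          rintro x ⟨u, hu, v, hv, rfl⟩
          intro y hy
          have := hcase y hy v hv u hu
          convert this using 1
          abel
        exact fun l hl x hx => hle hl x hx
      refine ⟨L, A, b0, hb0, subset_rfl, fun x hx => Finset.add_mem_add hx hb0,
        fun x hx l hl => hK l hl x hx, ?_⟩
      have hBL : B.card ≤ Nat.card L := by
        have h1 : B.card ≤ (Finset.univ.filter (fun x => x ∈ L)).card := by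
          apply Finset.card_le_card_of_injOn (fun u => u - b0)
          · intro u hu
            simp only [Finset.mem_coe, Finset.mem_filter, Finset.mem_univ, true_and]
            exact AddSubgroup.subset_closure (k := {x : G | ∃ u ∈ B, ∃ v ∈ B, x = u - v}) ⟨u, hu, b0, hb0, rfl⟩
          · intro x _ y _ h
            simpa using sub_left_inj.1 h
        have h2 : Nat.card L = (Finset.univ.filter (fun x => x ∈ L)).card := by
          rw [Nat.card_eq_fintype_card, Fintype.card_subtype]
        omega
      omega

lemma addCayley_cover {G : Type*} [AddCommGroup G] (S : Set G)
    (hconn : (addCayley S).Connected) (L : AddSubgroup G) (s0 : G) (hs0 : s0 ∈ S)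
    (hSL : ∀ σ ∈ S, σ - s0 ∈ L) : ∀ x : G, x ∈ L ∨ x - s0 ∈ L := by
  have key : ∀ (u v : G) (w : (addCayley S).Walk u v),
      (u ∈ L ∨ u - s0 ∈ L) → (v ∈ L ∨ v - s0 ∈ L) := by
    intro u v w
    induction w with
    | nil => exact id
    | @cons u v w hadj p ih =>
      intro hu
      apply ih
      have hσ : u + v - s0 ∈ L := hSL _ hadj.2
      rcases hu with hu | hu
      · right
        have : v - s0 = (u + v - s0) - u := by abel
        rw [this]; exact L.sub_mem hσ hu
      · left
        have : v = (u + v - s0) - (u - s0) := by abel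
        rw [this]; exact L.sub_mem hσ hu
  intro x
  obtain ⟨w⟩ := hconn.preconnected 0 x
  exact key 0 x w (Or.inl L.zero_mem)

/-- Corollary: if `G` is non-trivial, `Cay⁺(S)` is connected, and `p` is the smallest
order of a non-zero subgroup of `G`, then `κ(Cay⁺(S)) ≥ min{|S| − 1, p}`. -/
theorem corollary_charG {G : Type*} [AddCommGroup G] [Fintype G] [Nontrivial G]
    (S : Set G) (hS : S ≠ Set.univ)
    (hconn : (addCayley S).Connected)
    (p : ℕ) (hp : p = sInf {n : ℕ | ∃ H : AddSubgroup G, H ≠ ⊥ ∧ Nat.card H = n}) :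
    min (S.ncard - 1) p ≤ vertexConnectivity (addCayley S) := by
  classical
  set n := Fintype.card G with hn
  have hnn : Nat.card G = n := Nat.card_eq_fintype_card
  have hSne : S.Nonempty := by
    obtain ⟨x0, y0, hxy⟩ := exists_pair_ne G
    obtain ⟨w⟩ := hconn.preconnected x0 y0
    cases w with
    | nil => exact absurd rfl hxy
    | cons h _ => exact ⟨_, h.2⟩
  have hSlt : S.ncard < n := by
    have h1 := Set.ncard_lt_ncard ((Set.subset_univ S).ssubset_of_ne hS) Set.finite_univ
    rwa [Set.ncard_univ, hnn] at h1
  have hSpos : 1 ≤ S.ncard := (Set.ncard_pos (Set.toFinite S)).2 hSne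
  apply le_csInf
  · exact ⟨n, Set.univ, by rw [Set.ncard_univ, hnn], Or.inl (by simp)⟩
  rintro k ⟨s, rfl, hcut⟩
  by_contra hcon
  push_neg at hcon
  rw [lt_min_iff] at hcon
  obtain ⟨hk1, hk2⟩ := hcon
  have hns : s.ncard + (sᶜ : Set G).ncard = n := by
    rw [Set.ncard_add_ncard_compl, hnn]
  have hk1' : s.ncard + 2 ≤ S.ncard := by omega
  rcases hcut with hcut | hcut
  · omega
  have hscne : (sᶜ : Set G).Nonempty := by
    apply Set.nonempty_of_ncard_ne_zero
    omega
  obtain ⟨u0, hu0⟩ := hscne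
  haveI : Nonempty ↑(sᶜ : Set G) := ⟨⟨u0, hu0⟩⟩
  have hnp : ¬ ((addCayley S).induce (sᶜ : Set G)).Preconnected := fun hpre => hcut ⟨hpre⟩
  rw [SimpleGraph.Preconnected] at hnp
  push_neg at hnp
  obtain ⟨a, b, hnr⟩ := hnp
  set Aset : Set G := {x | ∃ hx : x ∈ (sᶜ : Set G),
    ((addCayley S).induce (sᶜ : Set G)).Reachable a ⟨x, hx⟩} with hAsetdef
  set Bset : Set G := (sᶜ : Set G) \ Aset with hBsetdef
  have haA : (a : G) ∈ Aset := ⟨a.2, SimpleGraph.Reachable.refl _⟩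
  have hbB : (b : G) ∈ Bset := by
    refine ⟨b.2, ?_⟩
    rintro ⟨hb', hr⟩
    exact hnr hr
  have hAB : ∀ x ∈ Aset, ∀ y ∈ Bset, x + y ∉ S := by
    rintro x ⟨hx, hrx⟩ y ⟨hy, hyA⟩ hxyS
    apply hyA
    refine ⟨hy, hrx.trans ?_⟩
    apply SimpleGraph.Adj.reachable
    show (addCayley S).Adj x y
    exact ⟨fun e => hyA (e ▸ ⟨hx, hrx⟩), hxyS⟩
  set AF := Finset.univ.filter (fun x => x ∈ Aset) with hAFdef
  set BF := Finset.univ.filter (fun x => x ∈ Bset) with hBFdef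
  set sF := Finset.univ.filter (fun x => x ∈ s) with hsFdef
  set SF := Finset.univ.filter (fun x => x ∈ S) with hSFdef
  have hncard : ∀ t : Set G, t.ncard = (Finset.univ.filter (fun x => x ∈ t)).card := by
    intro t
    rw [Set.ncard_eq_toFinset_card' t]
    congr 1
    ext x
    simp
  have hsFc : sF.card = s.ncard := (hncard s).symm
  have hSFc : SF.card = S.ncard := (hncard S).symm
  have hpart : AF.card + BF.card + sF.card = n := by
    have hu : AF ∪ BF ∪ sF = Finset.univ := by
      ext x
      simp only [Finset.mem_union, hAFdef, hBFdef, hsFdef, Finset.mem_filter,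
        Finset.mem_univ, true_and, iff_true]
      by_cases hxs : x ∈ s
      · right; exact hxs
      · left
        by_cases hxA : x ∈ Aset
        · left; exact hxA
        · right; exact ⟨hxs, hxA⟩
    have hd1 : Disjoint AF BF := by
      rw [Finset.disjoint_left]
      intro x hx1 hx2
      simp only [hAFdef, hBFdef, Finset.mem_filter, Finset.mem_univ, true_and] at hx1 hx2
      exact hx2.2 hx1
    have hd2 : Disjoint (AF ∪ BF) sF := by
      rw [Finset.disjoint_left]
      intro x hx1 hx2
      simp only [hAFdef, hBFdef, hsFdef, Finset.mem_union, Finset.mem_filter,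
        Finset.mem_univ, true_and] at hx1 hx2
      rcases hx1 with hx1 | hx1
      · rcases hx1 with ⟨hc, -⟩
        exact hc hx2
      · exact hx1.1 hx2
    rw [← Finset.card_union_of_disjoint hd1, ← Finset.card_union_of_disjoint hd2, hu,
      Finset.card_univ]
  have hAFne : AF.Nonempty := by
    refine ⟨(a : G), ?_⟩
    simp only [hAFdef, Finset.mem_filter, Finset.mem_univ, true_and]
    exact haA
  have hBFne : BF.Nonempty := by
    refine ⟨(b : G), ?_⟩
    simp only [hBFdef, Finset.mem_filter, Finset.mem_univ, true_and]
    exact hbB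
  obtain ⟨L, A', bs, hbsB, hAA', hsum, hper, hkcard⟩ :=
    kneser_weak BF.card AF BF le_rfl hAFne hBFne
  have havoid : ∀ z ∈ AF + BF, z ∉ S := by
    intro z hz
    obtain ⟨x, hx, y, hy, rfl⟩ := Finset.mem_add.1 hz
    simp only [hAFdef, hBFdef, Finset.mem_filter, Finset.mem_univ, true_and] at hx hy
    exact hAB x hx y hy
  set SL := Finset.univ.filter (fun x => ∃ σ ∈ SF, x - σ ∈ L) with hSLdef
  have hDSL : ∀ x ∈ A', x + bs ∉ SL := by
    intro x hx hmem
    simp only [hSLdef, Finset.mem_filter, Finset.mem_univ, true_and] at hmem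
    obtain ⟨σ, hσ, hl⟩ := hmem
    have h1 : x + -(x + bs - σ) ∈ A' := hper x hx _ (L.neg_mem hl)
    have h2 := hsum _ h1
    have h3 : (x + -(x + bs - σ)) + bs = σ := by abel
    rw [h3] at h2
    refine havoid σ h2 ?_
    simpa only [hSFdef, Finset.mem_filter, Finset.mem_univ, true_and] using hσ
  have hD : (A'.image (fun x => x + bs)).card = A'.card :=
    Finset.card_image_of_injective _ (add_left_injective bs)
  have hdisj : Disjoint (A'.image (fun x => x + bs)) SL := by
    rw [Finset.disjoint_left]
    rintro z hz hz2
    obtain ⟨x, hx, rfl⟩ := Finset.mem_image.1 hz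
    exact hDSL x hx hz2
  have hcard3 : A'.card + SL.card ≤ n := by
    rw [← hD, ← Finset.card_union_of_disjoint hdisj]
    simpa [hn] using Finset.card_le_univ (A'.image (fun x => x + bs) ∪ SL)
  have hSSL : SF ⊆ SL := by
    intro σ hσ
    simp only [hSLdef, Finset.mem_filter, Finset.mem_univ, true_and]
    exact ⟨σ, hσ, by simpa using L.zero_mem⟩
  have hSFSL : SF.card ≤ SL.card := Finset.card_le_card hSSL
  have hL2 : 2 ≤ Nat.card L := by omega
  have hLbot : L ≠ ⊥ := by
    intro h
    rw [h, AddSubgroup.card_bot] at hL2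
    omega
  have hpL : p ≤ Nat.card L := hp ▸ Nat.sInf_le ⟨L, hLbot, rfl⟩
  have hSL2 : SL.card < 2 * Nat.card L := by omega
  obtain ⟨s0, hs0⟩ := hSne
  have hLFcard : ∀ c : G, (Finset.univ.filter (fun x => x - c ∈ L)).card = Nat.card L := by
    intro c
    have h2 : Nat.card L = (Finset.univ.filter (fun x => x ∈ L)).card := by
      rw [Nat.card_eq_fintype_card, Fintype.card_subtype]
    rw [h2]
    apply Finset.card_bij (fun x _ => x - c)
    · intro x hx
      simp only [Finset.mem_filter, Finset.mem_univ, true_and] at hx ⊢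
      exact hx
    · intro x _ y _ h
      exact sub_left_inj.1 h
    · intro y hy
      simp only [Finset.mem_filter, Finset.mem_univ, true_and] at hy
      exact ⟨y + c, by simpa using hy, by simp⟩
  have hcosS : ∀ σ ∈ S, σ - s0 ∈ L := by
    by_contra hcc
    push_neg at hcc
    obtain ⟨σ1, hσ1, hno⟩ := hcc
    have hsub : ∀ c ∈ S, Finset.univ.filter (fun x => x - c ∈ L) ⊆ SL := by
      intro c hc x hx
      simp only [Finset.mem_filter, Finset.mem_univ, true_and] at hx
      simp only [hSLdef, Finset.mem_filter, Finset.mem_univ, true_and]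
      exact ⟨c, by simp only [hSFdef, Finset.mem_filter, Finset.mem_univ, true_and]; exact hc, hx⟩
    have hdj : Disjoint (Finset.univ.filter (fun x => x - s0 ∈ L))
        (Finset.univ.filter (fun x => x - σ1 ∈ L)) := by
      rw [Finset.disjoint_left]
      intro x hx1 hx2
      simp only [Finset.mem_filter, Finset.mem_univ, true_and] at hx1 hx2
      apply hno
      have : σ1 - s0 = (x - s0) - (x - σ1) := by abel
      rw [this]
      exact L.sub_mem hx1 hx2
    have hge : 2 * Nat.card L ≤ SL.card := by
      rw [two_mul]
      calc Nat.card L + Nat.card L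
          = (Finset.univ.filter (fun x => x - s0 ∈ L)).card +
            (Finset.univ.filter (fun x => x - σ1 ∈ L)).card := by rw [hLFcard, hLFcard]
        _ = (Finset.univ.filter (fun x => x - s0 ∈ L) ∪
            Finset.univ.filter (fun x => x - σ1 ∈ L)).card :=
            (Finset.card_union_of_disjoint hdj).symm
        _ ≤ SL.card := Finset.card_le_card
            (Finset.union_subset (hsub s0 hs0) (hsub σ1 hσ1))
    omega
  have hcov := addCayley_cover S hconn L s0 hs0 hcosS
  have hnotD : ∀ x ∈ A', x + bs ≠ s0 := by
    intro x hx he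
    exact havoid _ (hsum x hx) (he ▸ hs0)
  have ha0AF : (a : G) ∈ AF := by
    simp only [hAFdef, Finset.mem_filter, Finset.mem_univ, true_and]; exact haA
  set a0 : G := (a : G) with ha0def
  have ha0 : a0 ∈ A' := hAA' ha0AF
  by_cases hs0L : s0 ∈ L
  · have hall : ∀ x : G, x ∈ L := by
      intro x
      rcases hcov x with h | h
      · exact h
      · have hx : x = (x - s0) + s0 := by abel
        rw [hx]; exact L.add_mem h hs0L
    exact hnotD (a0 + (s0 - bs - a0)) (hper a0 ha0 _ (hall _)) (by abel)
  · have h2s0 : s0 + s0 ∈ L := by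
      rcases hcov (s0 + s0) with h | h
      · exact h
      · exfalso
        apply hs0L
        have he : s0 = s0 + s0 - s0 := by abel
        rw [he]; exact h
    have hA'cos : ∀ x ∈ A', x - a0 ∈ L := by
      intro x hx
      by_contra hxc
      have hx1 : x - a0 - s0 ∈ L := (hcov (x - a0)).resolve_left hxc
      rcases hcov (s0 - bs - a0) with h | h
      · exact hnotD _ (hper a0 ha0 _ h) (by abel)
      · have hmem : (s0 - bs) - x ∈ L := by
          have h9 : (s0 - bs) - x = (s0 - bs - a0 - s0) - (x - a0 - s0) := by abel
          rw [h9]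
          exact L.sub_mem h hx1
        exact hnotD _ (hper x hx _ hmem) (by abel)
    have h2a0 : a0 + a0 ∈ L := by
      rcases hcov a0 with h | h
      · exact L.add_mem h h
      · have he : a0 + a0 = (a0 - s0) + (a0 - s0) + (s0 + s0) := by abel
        rw [he]
        exact L.add_mem (L.add_mem h h) h2s0
    have hmap : ∀ σ ∈ SF, σ - a0 ∈ sF := by
      intro σ hσ
      have hσS : σ ∈ S := by
        simpa only [hSFdef, Finset.mem_filter, Finset.mem_univ, true_and] using hσ
      have h1 : σ - a0 ∉ Aset := by
        intro hmem
        have hinA' : σ - a0 ∈ A' := hAA' (by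
          simp only [hAFdef, Finset.mem_filter, Finset.mem_univ, true_and]; exact hmem)
        have hl1 : σ - a0 - a0 ∈ L := hA'cos _ hinA'
        apply hs0L
        have hσs0 : σ - s0 ∈ L := hcosS σ hσS
        have he : s0 = -(σ - s0) + (σ - a0 - a0) + (a0 + a0) := by abel
        rw [he]
        exact L.add_mem (L.add_mem (L.neg_mem hσs0) hl1) h2a0
      have h2 : σ - a0 ∉ Bset := by
        intro hmem
        apply hAB a0 haA (σ - a0) hmem
        have he : a0 + (σ - a0) = σ := by abel
        rw [he]; exact hσS
      simp only [hsFdef, Finset.mem_filter, Finset.mem_univ, true_and]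
      by_contra h3
      have hc : σ - a0 ∈ (sᶜ : Set G) := h3
      by_cases h4 : σ - a0 ∈ Aset
      · exact h1 h4
      · exact h2 ⟨hc, h4⟩
    have hfinal : SF.card ≤ sF.card :=
      Finset.card_le_card_of_injOn (fun σ => σ - a0) hmap
        (fun x _ y _ h => sub_left_inj.1 h)
    omega
end
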